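/- arXiv:1902.10254 — 9 statements merged into one kernel-verified Lean document; each statement's English description precedes it below -/
import Mathlib

section
/- Let M ≥ 1, let A be a Hermitian M×M complex matrix, let τ > 0 and λ ∈ ℝ. Suppose a sequence R : ℕ → ℂ^M satisfies, for every n ≥ 0, the implicit time-stepping scheme i·(R^{n+1} − R^n) = τ·( A·R^{n+1/2} + (λ/2)·N^n ) where R^{n+1/2} = (R^{n+1} + R^n)/2 and N^n is the vector with components N^n_j = (|R^n_j|² + |R^{n+1}_j|²)·R^{n+1/2}_j. Then the discrete mass 𝓜^n := Σ_j |R^n_j|² is conserved: 𝓜^n = 𝓜^0 for all n ≥ 1. -/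
open Finset

open Matrix in
lemma herm_quad_im_zero (M : ℕ) (A : Matrix (Fin M) (Fin M) ℂ) (hA : A.IsHermitian)
    (m : Fin M → ℂ) :
    (∑ j, (starRingEnd ℂ) (m j) * A.mulVec m j).im = 0 := by
  have h : (∑ j, (starRingEnd ℂ) (m j) * A.mulVec m j)
      = dotProduct (star m) (A.mulVec m) := by
    simp [dotProduct]
  have h2 : dotProduct (star m) (A.mulVec m)
      = star (dotProduct (star m) (A.mulVec m)) := by
    calc dotProduct (star m) (A.mulVec m)
        = star (dotProduct (star (A.mulVec m)) m) := Matrix.star_dotProduct _ _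
      _ = star (dotProduct (Matrix.vecMul (star m) Aᴴ) m) := by rw [Matrix.star_mulVec]
      _ = star (dotProduct (star m) (Aᴴ.mulVec m)) := by rw [dotProduct_mulVec]
      _ = star (dotProduct (star m) (A.mulVec m)) := by rw [hA.eq]
  rw [h]
  exact Complex.conj_eq_iff_im.mp h2.symm

lemma mid_mul_im (a b : ℂ) : ((starRingEnd ℂ) ((a+b)/2) * (Complex.I * (a - b))).im
    = (‖a‖^2 - ‖b‖^2)/2 := by
  rw [Complex.sq_norm, Complex.sq_norm]
  simp [Complex.mul_im, Complex.mul_re, Complex.div_re, Complex.div_im, Complex.normSq_apply]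
  ring

/-- Mass conservation for the implicit midpoint-type scheme for the cubic NLS,
fully discrete in space with a Hermitian matrix `A` representing `-Δ`. -/
theorem mass_conservation_cubic_scheme
    (M : ℕ) (hM : 1 ≤ M)
    (A : Matrix (Fin M) (Fin M) ℂ) (hA : A.IsHermitian)
    (τ lam : ℝ) (hτ : 0 < τ)
    (R : ℕ → EuclideanSpace ℂ (Fin M))
    (hscheme : ∀ n : ℕ, ∀ j : Fin M,
      Complex.I * (R (n+1) j - R n j) =
        (τ : ℂ) * (A.mulVec (fun k => (R (n+1) k + R n k) / 2) j
          + ((lam : ℂ)/2) *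
              ((((‖R n j‖)^2 + (‖R (n+1) j‖)^2 : ℝ)) : ℂ)
              * ((R (n+1) j + R n j) / 2))) :
    ∀ n : ℕ, 1 ≤ n →
      ∑ j, (‖R n j‖)^2 = ∑ j, (‖R 0 j‖)^2 := by
  have step : ∀ n : ℕ,
      ∑ j, (‖R (n+1) j‖)^2 = ∑ j, (‖R n j‖)^2 := by
    intro n
    set m : Fin M → ℂ := fun k => (R (n+1) k + R n k) / 2 with hm
    -- multiply the scheme by conj (m j)
    have key : ∀ j, (starRingEnd ℂ) (m j) * (Complex.I * (R (n+1) j - R n j)) =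
        (τ : ℂ) * ((starRingEnd ℂ) (m j) * A.mulVec m j
          + ((lam : ℂ)/2) *
              ((((‖R n j‖)^2 + (‖R (n+1) j‖)^2 : ℝ)) : ℂ)
              * ((starRingEnd ℂ) (m j) * m j)) := by
      intro j
      rw [hscheme n j]
      ring
    have hsum := congrArg Complex.im (Finset.sum_congr (rfl : (Finset.univ : Finset (Fin M)) = Finset.univ) (fun j _ => key j))
    rw [Complex.im_sum, Complex.im_sum] at hsum
    -- left side
    have hL : ∑ j, ((starRingEnd ℂ) (m j) * (Complex.I * (R (n+1) j - R n j))).im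
        = (∑ j, (‖R (n+1) j‖)^2 - ∑ j, (‖R n j‖)^2) / 2 := by
      rw [← Finset.sum_sub_distrib, Finset.sum_div]
      exact Finset.sum_congr rfl (fun j _ => mid_mul_im _ _)
    -- right side
    have hR : ∑ j, ((τ : ℂ) * ((starRingEnd ℂ) (m j) * A.mulVec m j
          + ((lam : ℂ)/2) *
              ((((‖R n j‖)^2 + (‖R (n+1) j‖)^2 : ℝ)) : ℂ)
              * ((starRingEnd ℂ) (m j) * m j))).im = 0 := by
      have hnl : ∀ j : Fin M, (((lam : ℂ)/2) *
              ((((‖R n j‖)^2 + (‖R (n+1) j‖)^2 : ℝ)) : ℂ)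
              * ((starRingEnd ℂ) (m j) * m j)).im = 0 := by
        intro j
        have : (starRingEnd ℂ) (m j) * m j = ((Complex.normSq (m j) : ℝ) : ℂ) := by
          rw [Complex.normSq_eq_conj_mul_self]
        rw [this]
        have : ((lam : ℂ)/2) *
              ((((‖R n j‖)^2 + (‖R (n+1) j‖)^2 : ℝ)) : ℂ)
              * ((Complex.normSq (m j) : ℝ) : ℂ)
            = (((lam/2) * ((‖R n j‖)^2 + (‖R (n+1) j‖)^2)
                * Complex.normSq (m j) : ℝ) : ℂ) := by
          push_cast
          ring
        rw [this, Complex.ofReal_im]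
      calc ∑ j, ((τ : ℂ) * ((starRingEnd ℂ) (m j) * A.mulVec m j
          + ((lam : ℂ)/2) *
              ((((‖R n j‖)^2 + (‖R (n+1) j‖)^2 : ℝ)) : ℂ)
              * ((starRingEnd ℂ) (m j) * m j))).im
          = ∑ j, τ * (((starRingEnd ℂ) (m j) * A.mulVec m j).im
            + (((lam : ℂ)/2) *
              ((((‖R n j‖)^2 + (‖R (n+1) j‖)^2 : ℝ)) : ℂ)
              * ((starRingEnd ℂ) (m j) * m j)).im) := by
            refine Finset.sum_congr rfl (fun j _ => ?_)
            rw [Complex.im_ofReal_mul, Complex.add_im]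
        _ = ∑ j, τ * ((starRingEnd ℂ) (m j) * A.mulVec m j).im := by
            refine Finset.sum_congr rfl (fun j _ => ?_)
            rw [hnl j, add_zero]
        _ = τ * ∑ j, ((starRingEnd ℂ) (m j) * A.mulVec m j).im := by
            rw [Finset.mul_sum]
        _ = τ * (∑ j, (starRingEnd ℂ) (m j) * A.mulVec m j).im := by
            rw [Complex.im_sum]
        _ = 0 := by rw [herm_quad_im_zero M A hA m, mul_zero]
    rw [hL, hR] at hsum
    linarith
  have main : ∀ n : ℕ, ∑ j, (‖R n j‖)^2 = ∑ j, (‖R 0 j‖)^2 := by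
    intro n
    induction n with
    | zero => rfl
    | succ k ih => rw [step k, ih]
  exact fun n _ => main n
end

section
/- Let M ≥ 1, let A be a Hermitian M×M complex matrix, let τ > 0 and λ ∈ ℝ. Suppose a sequence R : ℕ → ℂ^M satisfies, for every n ≥ 0, the implicit time-stepping scheme i·(R^{n+1} − R^n) = τ·( A·R^{n+1/2} + (λ/2)·N^n ) where R^{n+1/2} = (R^{n+1} + R^n)/2 and N^n_j = (|R^n_j|² + |R^{n+1}_j|²)·R^{n+1/2}_j. Then the discrete energy 𝓗^n := (1/2)·Re⟨A·R^n, R^n⟩ + (λ/4)·Σ_j |R^n_j|⁴ is conserved: 𝓗^n = 𝓗^0 for all n ≥ 1. -/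
open Finset

private lemma herm_swap {M : ℕ} (A : Matrix (Fin M) (Fin M) ℂ) (hA : A.IsHermitian)
    (x y : Fin M → ℂ) :
    ∑ j, (starRingEnd ℂ) (A.mulVec x j) * y j
      = ∑ j, (starRingEnd ℂ) (x j) * A.mulVec y j := by
  have hc : ∀ i j : Fin M, (starRingEnd ℂ) (A j i) = A i j := by
    intro i j
    conv_rhs => rw [← hA]
    simp [Matrix.conjTranspose_apply]
  simp only [Matrix.mulVec, dotProduct, map_sum, map_mul, Finset.sum_mul,
    Finset.mul_sum]
  rw [Finset.sum_comm]
  refine Finset.sum_congr rfl fun k _ => Finset.sum_congr rfl fun j _ => ?_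
  rw [hc k j]
  ring

private lemma re_div_two (z : ℂ) : (z / 2).re = z.re / 2 := by
  norm_num [Complex.div_re, Complex.normSq_apply]

private lemma herm_conj_swap {M : ℕ} (A : Matrix (Fin M) (Fin M) ℂ) (hA : A.IsHermitian)
    (x y : Fin M → ℂ) :
    ∑ j, (starRingEnd ℂ) (x j) * A.mulVec y j
      = (starRingEnd ℂ) (∑ j, (starRingEnd ℂ) (y j) * A.mulVec x j) := by
  rw [← herm_swap A hA y x, map_sum]
  refine Finset.sum_congr rfl fun j _ => ?_
  rw [map_mul, Complex.conj_conj]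
  ring

/-- The key one-step energy identity. -/
private lemma energy_step {M : ℕ} (A : Matrix (Fin M) (Fin M) ℂ) (hA : A.IsHermitian)
    (τ lam : ℝ) (hτ : 0 < τ) (u u' : Fin M → ℂ)
    (hs : ∀ j : Fin M,
      Complex.I * (u' j - u j) =
        (τ : ℂ) * (A.mulVec (fun k => (u' k + u k) / 2) j
          + ((lam : ℂ)/2) *
              ((((‖u j‖)^2 + (‖u' j‖)^2 : ℝ)) : ℂ)
              * ((u' j + u j) / 2))) :
    (1/2 : ℝ) * (∑ j, (starRingEnd ℂ) (A.mulVec (fun k => u' k) j) * u' j).re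
        + (lam/4) * ∑ j, (‖u' j‖)^4
      = (1/2 : ℝ) * (∑ j, (starRingEnd ℂ) (A.mulVec (fun k => u k) j) * u j).re
        + (lam/4) * ∑ j, (‖u j‖)^4 := by
  set S1 : ℂ := ∑ j, (starRingEnd ℂ) (u' j - u j) * A.mulVec (fun k => (u' k + u k) / 2) j
    with hS1def
  set S2 : ℂ := ∑ j, (starRingEnd ℂ) (u' j - u j) *
      (((((‖u j‖)^2 + (‖u' j‖)^2 : ℝ)) : ℂ) * ((u' j + u j) / 2))
    with hS2def
  -- sum the scheme against conj (u' - u)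
  have h0 : ∑ j, (starRingEnd ℂ) (u' j - u j) * (Complex.I * (u' j - u j))
      = (τ : ℂ) * S1 + ((τ * (lam/2) : ℝ) : ℂ) * S2 := by
    rw [hS1def, hS2def, Finset.mul_sum, Finset.mul_sum, ← Finset.sum_add_distrib]
    refine Finset.sum_congr rfl fun j _ => ?_
    rw [hs j]
    push_cast
    ring
  -- left side has zero real part
  have hL : (∑ j, (starRingEnd ℂ) (u' j - u j) * (Complex.I * (u' j - u j))).re = 0 := by
    rw [Complex.re_sum]
    refine Finset.sum_eq_zero fun j _ => ?_
    set z := u' j - u j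
    simp only [Complex.mul_re, Complex.mul_im, Complex.conj_re, Complex.conj_im,
      Complex.I_re, Complex.I_im]
    ring
  have hkey : S1.re + (lam/2) * S2.re = 0 := by
    have := congrArg Complex.re h0
    rw [hL, Complex.add_re, Complex.re_ofReal_mul, Complex.re_ofReal_mul] at this
    have h2 : τ * (S1.re + (lam/2) * S2.re) = 0 := by linarith [this]
    rcases mul_eq_zero.mp h2 with h | h
    · exact absurd h (ne_of_gt hτ)
    · exact h
  -- compute S2.re
  have hS2re : S2.re = (∑ j, (‖u' j‖)^4 - ∑ j, (‖u j‖)^4) / 2 := by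
    rw [hS2def, Complex.re_sum, ← Finset.sum_sub_distrib, Finset.sum_div]
    refine Finset.sum_congr rfl fun j _ => ?_
    set a := u j
    set b := u' j
    have hw : ((starRingEnd ℂ) (b - a) *
        (((((‖a‖)^2 + (‖b‖)^2 : ℝ)) : ℂ) * ((b + a) / 2)))
        = ((((‖a‖)^2 + (‖b‖)^2 : ℝ) / 2 : ℝ) : ℂ) *
            ((starRingEnd ℂ) (b - a) * (b + a)) := by
      push_cast
      ring
    rw [hw, Complex.re_ofReal_mul]
    have hre : ((starRingEnd ℂ) (b - a) * (b + a)).re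
        = Complex.normSq b - Complex.normSq a := by
      simp only [Complex.mul_re, Complex.add_re, Complex.add_im, Complex.sub_re,
        Complex.sub_im, Complex.conj_re, Complex.conj_im, Complex.normSq_apply]
      ring
    rw [hre]
    have ha2 : (‖a‖)^2 = Complex.normSq a := Complex.sq_norm a
    have hb2 : (‖b‖)^2 = Complex.normSq b := Complex.sq_norm b
    have ha4 : (‖a‖)^4 = (Complex.normSq a)^2 := by
      rw [show (4:ℕ) = 2*2 from rfl, pow_mul, ha2]
    have hb4 : (‖b‖)^4 = (Complex.normSq b)^2 := by
      rw [show (4:ℕ) = 2*2 from rfl, pow_mul, hb2]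
    rw [ha2, hb2, ha4, hb4]
    ring
  -- compute S1.re
  have hmv : ∀ j, A.mulVec (fun k => (u' k + u k) / 2) j
      = (A.mulVec u' j + A.mulVec u j) / 2 := by
    intro j
    simp only [Matrix.mulVec, dotProduct]
    rw [← Finset.sum_add_distrib, Finset.sum_div]
    exact Finset.sum_congr rfl fun k _ => by ring
  have hS1split : S1 = ((∑ j, (starRingEnd ℂ) (u' j) * A.mulVec u' j)
      - (∑ j, (starRingEnd ℂ) (u j) * A.mulVec u j)
      + ((∑ j, (starRingEnd ℂ) (u' j) * A.mulVec u j)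
        - (∑ j, (starRingEnd ℂ) (u j) * A.mulVec u' j))) / 2 := by
    rw [hS1def]
    rw [show ((∑ j, (starRingEnd ℂ) (u' j) * A.mulVec u' j)
      - (∑ j, (starRingEnd ℂ) (u j) * A.mulVec u j)
      + ((∑ j, (starRingEnd ℂ) (u' j) * A.mulVec u j)
        - (∑ j, (starRingEnd ℂ) (u j) * A.mulVec u' j)))
      = ∑ j, ((starRingEnd ℂ) (u' j) * A.mulVec u' j
          - (starRingEnd ℂ) (u j) * A.mulVec u j
          + ((starRingEnd ℂ) (u' j) * A.mulVec u j
            - (starRingEnd ℂ) (u j) * A.mulVec u' j)) by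
        rw [Finset.sum_add_distrib, Finset.sum_sub_distrib, Finset.sum_sub_distrib]]
    rw [Finset.sum_div]
    refine Finset.sum_congr rfl fun j _ => ?_
    rw [hmv j, map_sub]
    ring
  have hcross : ((∑ j, (starRingEnd ℂ) (u' j) * A.mulVec u j)
      - (∑ j, (starRingEnd ℂ) (u j) * A.mulVec u' j)).re = 0 := by
    rw [herm_conj_swap A hA u u', Complex.sub_re, Complex.conj_re, sub_self]
  have hQ : ∀ x : Fin M → ℂ, (∑ j, (starRingEnd ℂ) (A.mulVec (fun k => x k) j) * x j).re
      = (∑ j, (starRingEnd ℂ) (x j) * A.mulVec x j).re := by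
    intro x
    rw [show (fun k => x k) = x from rfl, herm_swap A hA x x]
  have hS1re : S1.re = ((∑ j, (starRingEnd ℂ) (u' j) * A.mulVec u' j).re
      - (∑ j, (starRingEnd ℂ) (u j) * A.mulVec u j).re) / 2 := by
    rw [hS1split, re_div_two, Complex.add_re, Complex.sub_re]
    rw [hcross]
    ring
  rw [hQ u', hQ u]
  rw [hS1re, hS2re] at hkey
  linarith [hkey]

/-- Energy conservation for the implicit midpoint-type scheme for the cubic NLS,
fully discrete in space with a Hermitian matrix `A` representing `-Δ`.
The discrete energy is `(1/2)·Re⟨A·Rⁿ, Rⁿ⟩ + (λ/4)·Σ_j |Rⁿ_j|⁴`, where the standard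
Hermitian inner product is written out as `⟨x, y⟩ = Σ_j conj(x_j)·y_j`. -/
theorem energy_conservation_cubic_scheme
    (M : ℕ) (hM : 1 ≤ M)
    (A : Matrix (Fin M) (Fin M) ℂ) (hA : A.IsHermitian)
    (τ lam : ℝ) (hτ : 0 < τ)
    (R : ℕ → EuclideanSpace ℂ (Fin M))
    (hscheme : ∀ n : ℕ, ∀ j : Fin M,
      Complex.I * (R (n+1) j - R n j) =
        (τ : ℂ) * (A.mulVec (fun k => (R (n+1) k + R n k) / 2) j
          + ((lam : ℂ)/2) *
              (((‖R n j‖^2 + ‖R (n+1) j‖^2 : ℝ)) : ℂ)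
              * ((R (n+1) j + R n j) / 2))) :
    ∀ n : ℕ, 1 ≤ n →
      (1/2 : ℝ) * (∑ j, (starRingEnd ℂ) (A.mulVec (fun k => R n k) j) * R n j).re
          + (lam/4) * ∑ j, ‖R n j‖^4
        = (1/2 : ℝ) * (∑ j, (starRingEnd ℂ) (A.mulVec (fun k => R 0 k) j) * R 0 j).re
          + (lam/4) * ∑ j, ‖R 0 j‖^4 := by
  intro n _
  induction n with
  | zero => rfl
  | succ m ih =>
    have step := energy_step A hA τ lam hτ (R m) (R (m+1)) (hscheme m)
    rcases Nat.eq_zero_or_pos m with hm | hm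
    · subst hm; exact step
    · exact step.trans (ih hm)
end

section
/- Let M ≥ 1, let A be a Hermitian M×M complex matrix, let τ > 0 and λ ∈ ℝ. Let F : ℝ → ℝ and G : ℝ → ℝ → ℝ satisfy the divided-difference property G(a,b)·(a − b) = F(a) − F(b) for all a, b ∈ ℝ. Suppose a sequence R : ℕ → ℂ^M satisfies, for every n ≥ 0, the scheme i·(R^{n+1} − R^n) = τ·( A·R^{n+1/2} + λ·N^n ) where R^{n+1/2} = (R^{n+1} + R^n)/2 and N^n_j = G(|R^{n+1}_j|², |R^n_j|²)·R^{n+1/2}_j. Then both the discrete mass 𝓜^n_g := Σ_j |R^n_j|² and the discrete energy 𝓗^n_g := Re⟨A·R^n, R^n⟩ + λ·Σ_j F(|R^n_j|²) are conserved: 𝓜^n_g = 𝓜^0_g and 𝓗^n_g = 𝓗^0_g for all n ≥ 1. -/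
open Finset

lemma cfact1 (a b : ℂ) : ((starRingEnd ℂ) (a+b) * (Complex.I*(a-b))).im
    = ‖a‖^2 - ‖b‖^2 := by
  simp [Complex.sq_norm, Complex.normSq_apply, Complex.mul_im, Complex.mul_re]; ring

lemma cfact2 (a b : ℂ) : ((starRingEnd ℂ) (a-b) * (Complex.I*(a-b))).re = 0 := by
  simp [Complex.mul_im, Complex.mul_re]; ring

lemma cfact4 (a b : ℂ) (g : ℝ) : ((starRingEnd ℂ) (a+b) * ((g:ℂ) * ((a+b)/2))).im = 0 := by
  simp [Complex.mul_im, Complex.mul_re, Complex.div_im, Complex.div_re]; ring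

lemma cfact5 (a b : ℂ) (g : ℝ) : ((starRingEnd ℂ) (a-b) * ((g:ℂ) * ((a+b)/2))).re
    = g * (‖a‖^2 - ‖b‖^2) / 2 := by
  simp [Complex.sq_norm, Complex.normSq_apply, Complex.mul_im, Complex.mul_re,
    Complex.div_im, Complex.div_re]
  ring

lemma herm_conj_sum {M : ℕ} {A : Matrix (Fin M) (Fin M) ℂ} (hA : A.IsHermitian) (x y : Fin M → ℂ) :
    (starRingEnd ℂ) (∑ j, (starRingEnd ℂ) (x j) * A.mulVec y j)
      = ∑ j, (starRingEnd ℂ) (y j) * A.mulVec x j := by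
  simp only [map_sum, Matrix.mulVec, dotProduct, Finset.mul_sum, map_mul, Complex.conj_conj]
  rw [Finset.sum_comm]
  refine Finset.sum_congr rfl fun j _ => Finset.sum_congr rfl fun k _ => ?_
  have hk : (starRingEnd ℂ) (A k j) = A j k := by
    conv_rhs => rw [← hA]
    rfl
  rw [hk]; ring

lemma mulVec_half {M:ℕ} (A : Matrix (Fin M) (Fin M) ℂ) (u v : Fin M → ℂ) (j : Fin M) :
    A.mulVec (fun k => (u k + v k)/2) j = (A.mulVec (fun k => u k + v k) j)/2 := by
  simp [Matrix.mulVec, dotProduct, mul_div_assoc, Finset.sum_div]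

lemma mulVec_addf {M:ℕ} (A : Matrix (Fin M) (Fin M) ℂ) (u v : Fin M → ℂ) (j : Fin M) :
    A.mulVec (fun k => u k + v k) j = A.mulVec u j + A.mulVec v j := by
  simp [Matrix.mulVec, dotProduct, mul_add, Finset.sum_add_distrib]

lemma step_lemma {M : ℕ} (A : Matrix (Fin M) (Fin M) ℂ) (hA : A.IsHermitian)
    (τ lam : ℝ) (hτ : τ ≠ 0)
    (F : ℝ → ℝ) (G : ℝ → ℝ → ℝ)
    (hG : ∀ a b : ℝ, G a b * (a - b) = F a - F b)
    (u v : Fin M → ℂ)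
    (h : ∀ j, Complex.I * (u j - v j) =
        (τ : ℂ) * (A.mulVec (fun k => (u k + v k) / 2) j
          + (lam : ℂ) * ((G (‖u j‖^2) (‖v j‖^2) : ℝ) : ℂ)
              * ((u j + v j) / 2))) :
    (∑ j, ‖u j‖^2 = ∑ j, ‖v j‖^2) ∧
    ((∑ j, (starRingEnd ℂ) (u j) * A.mulVec u j).re + lam * ∑ j, F (‖u j‖^2)
      = (∑ j, (starRingEnd ℂ) (v j) * A.mulVec v j).re + lam * ∑ j, F (‖v j‖^2)) := by
  set s : Fin M → ℂ := fun k => u k + v k with hs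
  set gg : Fin M → ℝ := fun j => G (‖u j‖^2) (‖v j‖^2) with hgg
  have hZ : (∑ j, (starRingEnd ℂ) (s j) * A.mulVec s j).im = 0 :=
    Complex.conj_eq_iff_im.mp (herm_conj_sum hA s s)
  have hcross : (∑ j, (starRingEnd ℂ) (u j) * A.mulVec v j).re
      = (∑ j, (starRingEnd ℂ) (v j) * A.mulVec u j).re := by
    rw [← herm_conj_sum hA v u, Complex.conj_re]
  -- Mass
  have hmass : ∑ j, ‖u j‖^2 = ∑ j, ‖v j‖^2 := by
    have h1 : ∑ j, (starRingEnd ℂ) (s j) * (Complex.I * (u j - v j))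
        = (τ : ℂ) * ((∑ j, (starRingEnd ℂ) (s j) * A.mulVec (fun k => (u k + v k)/2) j)
          + ∑ j, (starRingEnd ℂ) (s j) * ((lam : ℂ) * ((gg j : ℝ) : ℂ) * ((u j + v j)/2))) := by
      rw [mul_add, Finset.mul_sum, Finset.mul_sum, ← Finset.sum_add_distrib]
      refine Finset.sum_congr rfl fun j _ => ?_
      rw [h j]; simp only [hgg]; ring
    have hX : (∑ j, (starRingEnd ℂ) (s j) * A.mulVec (fun k => (u k + v k)/2) j).im = 0 := by
      have he : ∑ j, (starRingEnd ℂ) (s j) * A.mulVec (fun k => (u k + v k)/2) j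
          = (∑ j, (starRingEnd ℂ) (s j) * A.mulVec s j) / 2 := by
        rw [Finset.sum_div]
        refine Finset.sum_congr rfl fun j _ => ?_
        rw [mulVec_half A u v j]; ring
      rw [he, Complex.div_ofNat_im, hZ]; simp
    have hY : (∑ j, (starRingEnd ℂ) (s j) * ((lam : ℂ) * ((gg j : ℝ) : ℂ) * ((u j + v j)/2))).im
        = 0 := by
      rw [Complex.im_sum]
      refine Finset.sum_eq_zero fun j _ => ?_
      have hc : (lam : ℂ) * ((gg j : ℝ) : ℂ) = (((lam * gg j : ℝ)) : ℂ) := by push_cast; ring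
      rw [hc]
      exact cfact4 (u j) (v j) (lam * gg j)
    have him := congrArg Complex.im h1
    rw [Complex.im_sum] at him
    have hL : ∑ j, ((starRingEnd ℂ) (s j) * (Complex.I * (u j - v j))).im
        = ∑ j, ‖u j‖^2 - ∑ j, ‖v j‖^2 := by
      rw [← Finset.sum_sub_distrib]
      exact Finset.sum_congr rfl fun j _ => cfact1 (u j) (v j)
    rw [hL] at him
    rw [show ((τ : ℂ) * ((∑ j, (starRingEnd ℂ) (s j) * A.mulVec (fun k => (u k + v k)/2) j)
          + ∑ j, (starRingEnd ℂ) (s j) * ((lam : ℂ) * ((gg j : ℝ) : ℂ) * ((u j + v j)/2)))).im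
        = τ * ((∑ j, (starRingEnd ℂ) (s j) * A.mulVec (fun k => (u k + v k)/2) j).im
          + (∑ j, (starRingEnd ℂ) (s j) * ((lam : ℂ) * ((gg j : ℝ) : ℂ) * ((u j + v j)/2))).im)
      from by simp [Complex.mul_im], hX, hY] at him
    have := him
    linarith [this]
  refine ⟨hmass, ?_⟩
  -- Energy
  have h1 : ∑ j, (starRingEnd ℂ) (u j - v j) * (Complex.I * (u j - v j))
      = (τ : ℂ) * ((∑ j, (starRingEnd ℂ) (u j - v j) * A.mulVec (fun k => (u k + v k)/2) j)
        + ∑ j, (starRingEnd ℂ) (u j - v j) * ((lam : ℂ) * ((gg j : ℝ) : ℂ) * ((u j + v j)/2))) := by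
    rw [mul_add, Finset.mul_sum, Finset.mul_sum, ← Finset.sum_add_distrib]
    refine Finset.sum_congr rfl fun j _ => ?_
    rw [h j]; simp only [hgg]; ring
  have hX : (∑ j, (starRingEnd ℂ) (u j - v j) * A.mulVec (fun k => (u k + v k)/2) j).re
      = ((∑ j, (starRingEnd ℂ) (u j) * A.mulVec u j).re
        - (∑ j, (starRingEnd ℂ) (v j) * A.mulVec v j).re) / 2 := by
    have hterm : ∀ j, (starRingEnd ℂ) (u j - v j) * A.mulVec (fun k => (u k + v k)/2) j
        = ((starRingEnd ℂ) (u j) * A.mulVec u j + (starRingEnd ℂ) (u j) * A.mulVec v j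
          - (starRingEnd ℂ) (v j) * A.mulVec u j - (starRingEnd ℂ) (v j) * A.mulVec v j) / 2 := by
      intro j
      rw [mulVec_half A u v j, mulVec_addf A u v j, map_sub]; ring
    have hsplit : ∑ j, (starRingEnd ℂ) (u j - v j) * A.mulVec (fun k => (u k + v k)/2) j
        = ((∑ j, (starRingEnd ℂ) (u j) * A.mulVec u j)
          + (∑ j, (starRingEnd ℂ) (u j) * A.mulVec v j)
          - (∑ j, (starRingEnd ℂ) (v j) * A.mulVec u j)
          - (∑ j, (starRingEnd ℂ) (v j) * A.mulVec v j)) / 2 := by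
      rw [Finset.sum_congr rfl (fun j _ => hterm j), ← Finset.sum_div]
      congr 1
      rw [Finset.sum_sub_distrib, Finset.sum_sub_distrib, Finset.sum_add_distrib]
    rw [hsplit, Complex.div_ofNat_re, Complex.sub_re, Complex.sub_re, Complex.add_re, hcross]
    ring
  have hY : (∑ j, (starRingEnd ℂ) (u j - v j) * ((lam : ℂ) * ((gg j : ℝ) : ℂ) * ((u j + v j)/2))).re
      = lam * ((∑ j, F (‖u j‖^2)) - ∑ j, F (‖v j‖^2)) / 2 := by
    rw [Complex.re_sum]
    have hterm : ∀ j ∈ Finset.univ (α := Fin M),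
        ((starRingEnd ℂ) (u j - v j) * ((lam : ℂ) * ((gg j : ℝ) : ℂ) * ((u j + v j)/2))).re
        = lam * (F (‖u j‖^2) - F (‖v j‖^2)) / 2 := by
      intro j _
      have hc : (lam : ℂ) * ((gg j : ℝ) : ℂ) = (((lam * gg j : ℝ)) : ℂ) := by push_cast; ring
      rw [hc, cfact5 (u j) (v j) (lam * gg j)]
      have hGj := hG (‖u j‖^2) (‖v j‖^2)
      simp only [hgg]
      linear_combination (lam/2) * hGj
    rw [Finset.sum_congr rfl hterm, ← Finset.sum_div, ← Finset.mul_sum, Finset.sum_sub_distrib]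
  have hre : ((τ : ℂ) * ((∑ j, (starRingEnd ℂ) (u j - v j) * A.mulVec (fun k => (u k + v k)/2) j)
        + ∑ j, (starRingEnd ℂ) (u j - v j) * ((lam : ℂ) * ((gg j : ℝ) : ℂ) * ((u j + v j)/2)))).re
      = 0 := by
    rw [← h1, Complex.re_sum]
    exact Finset.sum_eq_zero fun j _ => cfact2 (u j) (v j)
  rw [show ∀ z w : ℂ, ((τ : ℂ) * (z + w)).re = τ * (z.re + w.re)
      from fun z w => by simp [Complex.mul_im, Complex.mul_re], hX, hY] at hre
  have h2 := (mul_eq_zero.mp hre).resolve_left hτ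
  linarith

lemma re_flip_sum {M : ℕ} (A : Matrix (Fin M) (Fin M) ℂ) (x : Fin M → ℂ) :
    (∑ j, (starRingEnd ℂ) (A.mulVec x j) * x j).re
      = (∑ j, (starRingEnd ℂ) (x j) * A.mulVec x j).re := by
  rw [Complex.re_sum, Complex.re_sum]
  exact Finset.sum_congr rfl fun j _ => by simp [Complex.mul_re]; ring

/-- Mass and energy conservation for the scheme for the Schrödinger equation with a
general nonlinearity `f`, where `F(s) = ∫₀^s f` and `G(a,b) = (F(a) − F(b))/(a − b)`
(only the divided-difference property `G(a,b)(a−b) = F(a) − F(b)` is used).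
The discrete energy is `Re⟨A·Rⁿ, Rⁿ⟩ + λ·Σ_j F(|Rⁿ_j|²)`, with the standard Hermitian
inner product written out as `⟨x, y⟩ = Σ_j conj(x_j)·y_j`. -/
theorem mass_energy_conservation_general_scheme
    (M : ℕ) (hM : 1 ≤ M)
    (A : Matrix (Fin M) (Fin M) ℂ) (hA : A.IsHermitian)
    (τ lam : ℝ) (hτ : 0 < τ)
    (F : ℝ → ℝ) (G : ℝ → ℝ → ℝ)
    (hG : ∀ a b : ℝ, G a b * (a - b) = F a - F b)
    (R : ℕ → EuclideanSpace ℂ (Fin M))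
    (hscheme : ∀ n : ℕ, ∀ j : Fin M,
      Complex.I * (R (n+1) j - R n j) =
        (τ : ℂ) * (A.mulVec (fun k => (R (n+1) k + R n k) / 2) j
          + (lam : ℂ) *
              ((G (‖R (n+1) j‖^2) (‖R n j‖^2) : ℝ) : ℂ)
              * ((R (n+1) j + R n j) / 2))) :
    ∀ n : ℕ, 1 ≤ n →
      (∑ j, ‖R n j‖^2 = ∑ j, ‖R 0 j‖^2) ∧
      ((∑ j, (starRingEnd ℂ) (A.mulVec (fun k => R n k) j) * R n j).re
          + lam * ∑ j, F (‖R n j‖^2)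
        = (∑ j, (starRingEnd ℂ) (A.mulVec (fun k => R 0 k) j) * R 0 j).re
          + lam * ∑ j, F (‖R 0 j‖^2)) := by
  have key : ∀ n : ℕ,
      (∑ j, ‖R n j‖^2 = ∑ j, ‖R 0 j‖^2) ∧
      ((∑ j, (starRingEnd ℂ) (R n j) * A.mulVec (fun k => R n k) j).re
          + lam * ∑ j, F (‖R n j‖^2)
        = (∑ j, (starRingEnd ℂ) (R 0 j) * A.mulVec (fun k => R 0 k) j).re
          + lam * ∑ j, F (‖R 0 j‖^2)) := by
    intro n
    induction n with
    | zero => exact ⟨rfl, rfl⟩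
    | succ m ih =>
      obtain ⟨hm, he⟩ := step_lemma A hA τ lam (ne_of_gt hτ) F G hG
        (fun k => R (m+1) k) (fun k => R m k) (fun j => hscheme m j)
      exact ⟨hm.trans ih.1, he.trans ih.2⟩
  intro n _
  refine ⟨(key n).1, ?_⟩
  rw [re_flip_sum A (fun k => R n k), re_flip_sum A (fun k => R 0 k)]
  exact (key n).2
end

section
/- Let t₀ ∈ ℝ. Then the modified Crank–Nicolson local truncation error, i.e. the function TE(τ) := (i/τ)·(v(t₀+τ) − v(t₀)) + (1/2)·(w(t₀+τ) + w(t₀)) − (λ/4)·(|v(t₀)|² + |v(t₀+τ)|²)·(v(t₀+τ) + v(t₀)), is O(τ²) as τ → 0⁺, i.e. TE =O[𝓝[>]0] (fun τ => τ²). -/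
open Filter Topology

section CNAux
open Set

lemma iDW_one (f : ℝ → ℂ) (hf : ContDiff ℝ 1 f) (a b : ℝ) (hab : a < b) (x : ℝ)
    (hx : x ∈ Icc a b) :
    iteratedDerivWithin 1 f (Icc a b) x = deriv f x := by
  rw [iteratedDerivWithin_one]
  exact ((hf.differentiable one_ne_zero) x).derivWithin ((uniqueDiffOn_Icc hab) x hx)

lemma iDW_two (f : ℝ → ℂ) (hf : ContDiff ℝ 2 f) (a b : ℝ) (hab : a < b) (x : ℝ)
    (hx : x ∈ Icc a b) :
    iteratedDerivWithin 2 f (Icc a b) x = deriv (deriv f) x := by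
  have hu := uniqueDiffOn_Icc hab
  have hf1 : ContDiff ℝ 1 f := hf.of_le (by norm_num)
  have hdf : ContDiff ℝ 1 (deriv f) := by
    have := (contDiff_succ_iff_deriv (n := 1)).mp (by exact_mod_cast hf)
    exact this.2.2
  rw [show (2:ℕ) = 1+1 from rfl, iteratedDerivWithin_succ]
  rw [derivWithin_congr (fun y hy => iDW_one f hf1 a b hab y hy) (iDW_one f hf1 a b hab x hx)]
  exact ((hdf.differentiable one_ne_zero) x).derivWithin (hu x hx)

lemma taylor2_bigO (f : ℝ → ℂ) (hf : ContDiff ℝ 2 f) (t₀ : ℝ) :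
    (fun τ : ℝ => f (t₀ + τ) - f t₀ - (τ : ℂ) * deriv f t₀) =O[𝓝[>] (0:ℝ)]
      (fun τ : ℝ => τ ^ 2) := by
  have hab : t₀ < t₀ + 1 := by linarith
  obtain ⟨C, hC⟩ := exists_taylor_mean_remainder_bound (n := 1) hab.le
    (hf.contDiffOn (s := Icc t₀ (t₀+1)) |>.of_le (by norm_num))
  rw [Asymptotics.isBigO_iff]
  refine ⟨C, ?_⟩
  filter_upwards [Ioc_mem_nhdsGT_of_mem (by simp : (0:ℝ) ∈ Ico (0:ℝ) 1)] with τ hτ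
  have hmem : t₀ + τ ∈ Icc t₀ (t₀+1) := ⟨by linarith [hτ.1], by linarith [hτ.2]⟩
  have := hC (t₀ + τ) hmem
  have htay : taylorWithinEval f 1 (Icc t₀ (t₀+1)) t₀ (t₀ + τ)
      = f t₀ + (τ : ℂ) * deriv f t₀ := by
    rw [taylor_within_apply]
    simp [Finset.sum_range_succ, iteratedDerivWithin_zero,
      iDW_one f (hf.of_le (by norm_num)) t₀ (t₀+1) hab t₀ (left_mem_Icc.mpr hab.le),
      Complex.real_smul]
  rw [htay] at this
  calc ‖f (t₀ + τ) - f t₀ - (τ : ℂ) * deriv f t₀‖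
      = ‖f (t₀ + τ) - (f t₀ + (τ : ℂ) * deriv f t₀)‖ := by rw [sub_sub]
    _ ≤ C * (t₀ + τ - t₀) ^ 2 := this
    _ ≤ C * ‖τ ^ 2‖ := by
        have : t₀ + τ - t₀ = τ := by ring
        rw [this]
        simp [abs_of_pos hτ.1, le_refl]

lemma taylor3_bigO (f : ℝ → ℂ) (hf : ContDiff ℝ 3 f) (t₀ : ℝ) :
    (fun τ : ℝ => f (t₀ + τ) - f t₀ - (τ : ℂ) * deriv f t₀
      - ((τ^2/2 : ℝ) : ℂ) * deriv (deriv f) t₀) =O[𝓝[>] (0:ℝ)]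
      (fun τ : ℝ => τ ^ 3) := by
  have hab : t₀ < t₀ + 1 := by linarith
  obtain ⟨C, hC⟩ := exists_taylor_mean_remainder_bound (n := 2) hab.le
    (hf.contDiffOn (s := Icc t₀ (t₀+1)) |>.of_le (by norm_num))
  rw [Asymptotics.isBigO_iff]
  refine ⟨C, ?_⟩
  filter_upwards [Ioc_mem_nhdsGT_of_mem (by simp : (0:ℝ) ∈ Ico (0:ℝ) 1)] with τ hτ
  have hmem : t₀ + τ ∈ Icc t₀ (t₀+1) := ⟨by linarith [hτ.1], by linarith [hτ.2]⟩
  have hb := hC (t₀ + τ) hmem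
  have htay : taylorWithinEval f 2 (Icc t₀ (t₀+1)) t₀ (t₀ + τ)
      = f t₀ + (τ : ℂ) * deriv f t₀ + ((τ^2/2 : ℝ) : ℂ) * deriv (deriv f) t₀ := by
    rw [taylor_within_apply, Finset.sum_range_succ, Finset.sum_range_succ,
      Finset.sum_range_one]
    rw [iteratedDerivWithin_zero,
      iDW_one f (hf.of_le (by norm_num)) t₀ (t₀+1) hab t₀ (left_mem_Icc.mpr hab.le),
      iDW_two f (hf.of_le (by norm_num)) t₀ (t₀+1) hab t₀ (left_mem_Icc.mpr hab.le)]
    simp only [Complex.real_smul]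
    push_cast [Nat.factorial]
    ring
  rw [htay] at hb
  calc ‖f (t₀ + τ) - f t₀ - (τ : ℂ) * deriv f t₀ - ((τ^2/2 : ℝ) : ℂ) * deriv (deriv f) t₀‖
      = ‖f (t₀ + τ) - (f t₀ + (τ : ℂ) * deriv f t₀
          + ((τ^2/2 : ℝ) : ℂ) * deriv (deriv f) t₀)‖ := by rw [sub_sub, sub_sub, add_assoc]
    _ ≤ C * (t₀ + τ - t₀) ^ 3 := hb
    _ ≤ C * ‖τ ^ 3‖ := by
        have h : t₀ + τ - t₀ = τ := by ring
        rw [h]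
        simp [abs_of_pos hτ.1, le_refl]

end CNAux


/-- The local truncation error of the modified Crank–Nicolson scheme for the cubic
nonlinear Schrödinger equation is `O(τ²)` as `τ → 0⁺`. Here `v(t) = u(x₀,t)` and
`w(t) = Δu(x₀,t)` for a smooth solution `u` of `i u_t + Δu = λ|u|²u`. -/
theorem crank_nicolson_truncation_error
    (lam : ℝ) (v w : ℝ → ℂ)
    (hv : ContDiff ℝ 3 v) (hw : ContDiff ℝ 2 w)
    (hpde : ∀ t : ℝ, Complex.I * deriv v t
      = -w t + (lam : ℂ) * ((‖v t‖^2 : ℝ) : ℂ) * v t)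
    (t₀ : ℝ) :
    (fun τ : ℝ =>
        (Complex.I / (τ : ℂ)) * (v (t₀ + τ) - v t₀)
        + (1/2 : ℂ) * (w (t₀ + τ) + w t₀)
        - ((lam : ℂ)/4) * (((‖v t₀‖^2 + ‖v (t₀ + τ)‖^2 : ℝ)) : ℂ)
            * (v (t₀ + τ) + v t₀))
      =O[𝓝[>] (0 : ℝ)] (fun τ : ℝ => τ^2) := by
  have hvd : Differentiable ℝ v := hv.differentiable (by norm_num)
  have hv' : ContDiff ℝ 2 (deriv v) := by
    have := (contDiff_succ_iff_deriv (n := 2)).mp (by exact_mod_cast hv)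
    exact this.2.2
  have h3 := taylor3_bigO v hv t₀
  have h2 := taylor2_bigO (deriv v) hv' t₀
  -- Term 1 : (I/τ) * third-order Taylor remainder = O(τ²)
  have hinv : (fun τ : ℝ => Complex.I / (τ:ℂ)) =O[𝓝[>] (0:ℝ)] (fun τ : ℝ => τ⁻¹) := by
    rw [Asymptotics.isBigO_iff]
    refine ⟨1, ?_⟩
    filter_upwards [self_mem_nhdsWithin] with τ (hτ : (0:ℝ) < τ)
    simp [Complex.norm_def, abs_of_pos hτ]
  have hA : (fun τ : ℝ => (Complex.I/(τ:ℂ)) * (v (t₀+τ) - v t₀ - (τ:ℂ) * deriv v t₀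
      - ((τ^2/2 : ℝ):ℂ) * deriv (deriv v) t₀)) =O[𝓝[>] (0:ℝ)] (fun τ => τ^2) := by
    refine (hinv.mul h3).congr' EventuallyEq.rfl ?_
    filter_upwards [self_mem_nhdsWithin] with τ (hτ : (0:ℝ) < τ)
    have hτ0 : τ ≠ 0 := ne_of_gt hτ
    field_simp
  -- Term 2 : (I/2) * second-order Taylor remainder of deriv v = O(τ²)
  have hA2 : (fun τ : ℝ => (Complex.I/2) * (deriv v (t₀+τ) - deriv v t₀
      - (τ:ℂ) * deriv (deriv v) t₀)) =O[𝓝[>] (0:ℝ)] (fun τ => τ^2) :=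
    h2.const_mul_left _
  -- Term 3 : nonlinear part = O(τ²)
  have hCv : (fun τ : ℝ => v (t₀+τ) - v t₀) =O[𝓝[>] (0:ℝ)] (fun τ : ℝ => τ) := by
    have hd : DifferentiableAt ℝ (fun τ : ℝ => v (t₀+τ)) 0 := by
      exact (hvd (t₀+0)).comp 0 (by fun_prop)
    have := hd.isBigO_sub
    simp only [add_zero, sub_zero] at this
    exact this.mono nhdsWithin_le_nhds
  have hBv : (fun τ : ℝ => ((‖v (t₀+τ)‖^2 - ‖v t₀‖^2 : ℝ) : ℂ))
      =O[𝓝[>] (0:ℝ)] (fun τ : ℝ => τ) := by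
    have hvc : DifferentiableAt ℝ (fun τ : ℝ => v (t₀+τ)) 0 := (hvd (t₀+0)).comp 0 (by fun_prop)
    have hre : DifferentiableAt ℝ (fun τ : ℝ => (v (t₀+τ)).re) 0 := by
      simpa [Function.comp_def] using Complex.reCLM.differentiableAt.comp 0 hvc
    have him : DifferentiableAt ℝ (fun τ : ℝ => (v (t₀+τ)).im) 0 := by
      simpa [Function.comp_def] using Complex.imCLM.differentiableAt.comp 0 hvc
    have hg : DifferentiableAt ℝ (fun τ : ℝ => (v (t₀+τ)).re^2 + (v (t₀+τ)).im^2) 0 :=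
      (hre.pow 2).add (him.pow 2)
    have h1 : (fun τ : ℝ => ((v (t₀+τ)).re^2 + (v (t₀+τ)).im^2)
        - ((v (t₀+0)).re^2 + (v (t₀+0)).im^2)) =O[𝓝 (0:ℝ)] (fun τ : ℝ => τ) := by
      have := hg.isBigO_sub
      simp only [sub_zero] at this
      exact this
    have h2' : (fun τ : ℝ => ((‖v (t₀+τ)‖^2 - ‖v t₀‖^2 : ℝ) : ℂ))
        =O[𝓝 (0:ℝ)] (fun τ : ℝ => ((v (t₀+τ)).re^2 + (v (t₀+τ)).im^2)
          - ((v (t₀+0)).re^2 + (v (t₀+0)).im^2)) := by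
      have habs : ∀ z : ℂ, ‖z‖^2 = z.re^2 + z.im^2 := by
        intro z; rw [Complex.sq_norm, Complex.normSq_apply]; ring
      have := Complex.ofRealCLM.isBigO_comp
        (fun τ : ℝ => ((v (t₀+τ)).re^2 + (v (t₀+τ)).im^2)
          - ((v (t₀+0)).re^2 + (v (t₀+0)).im^2)) (𝓝 (0:ℝ))
      refine this.congr_left fun τ => ?_
      simp [habs, add_zero]
    exact ((h2'.trans h1).mono nhdsWithin_le_nhds)
  have hA3 : (fun τ : ℝ => ((lam:ℂ)/4)
      * ((‖v (t₀+τ)‖^2 - ‖v t₀‖^2 : ℝ) : ℂ)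
      * (v (t₀+τ) - v t₀)) =O[𝓝[>] (0:ℝ)] (fun τ => τ^2) := by
    have := ((hBv.mul hCv).const_mul_left ((lam:ℂ)/4))
    refine (this.congr_left fun τ => by ring).congr_right fun τ => by ring
  -- Combine
  have hG := (hA.sub hA2).add hA3
  have heq : (fun τ : ℝ =>
        (Complex.I / (τ : ℂ)) * (v (t₀ + τ) - v t₀)
        + (1/2 : ℂ) * (w (t₀ + τ) + w t₀)
        - ((lam : ℂ)/4) * (((‖v t₀‖^2 + ‖v (t₀ + τ)‖^2 : ℝ)) : ℂ)
            * (v (t₀ + τ) + v t₀))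
      =ᶠ[𝓝[>] (0:ℝ)] (fun τ : ℝ =>
        (Complex.I/(τ:ℂ)) * (v (t₀+τ) - v t₀ - (τ:ℂ) * deriv v t₀
          - ((τ^2/2 : ℝ):ℂ) * deriv (deriv v) t₀)
        - (Complex.I/2) * (deriv v (t₀+τ) - deriv v t₀ - (τ:ℂ) * deriv (deriv v) t₀)
        + ((lam:ℂ)/4) * ((‖v (t₀+τ)‖^2 - ‖v t₀‖^2 : ℝ) : ℂ)
          * (v (t₀+τ) - v t₀)) := by
    have hw' : ∀ t : ℝ, w t = (lam : ℂ) * ((‖v t‖^2 : ℝ) : ℂ) * v t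
        - Complex.I * deriv v t := fun t => by linear_combination hpde t
    filter_upwards [self_mem_nhdsWithin] with τ (hτ : (0:ℝ) < τ)
    have hτ0 : (τ:ℂ) ≠ 0 := by exact_mod_cast ne_of_gt hτ
    rw [hw' (t₀+τ), hw' t₀]
    push_cast
    field_simp
    ring
  exact heq.trans_isBigO hG
end

section
/- Let t₀ ∈ ℝ. Then the Leapfrog local truncation error, i.e. the function TE(τ) := (i/(2τ))·(v(t₀+τ) − v(t₀−τ)) + (1/4)·(w(t₀+τ) + 2·w(t₀) + w(t₀−τ)) − (λ/8)·( |(v(t₀) + v(t₀−τ))/2|² + |(v(t₀+τ) + v(t₀))/2|² )·(v(t₀+τ) + 2·v(t₀) + v(t₀−τ)), is O(τ²) as τ → 0⁺, i.e. TE =O[𝓝[>]0] (fun τ => τ²). -/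
open Filter Topology

open Asymptotics in
private lemma core2 (f : ℝ → ℂ) (hf : ContDiff ℝ 2 f) (t : ℝ) :
    ∃ C : ℝ, 0 ≤ C ∧ ∃ ε > (0:ℝ), ∀ τ : ℝ, |τ| < ε →
      ‖f (t+τ) - f t - (τ:ℂ) * deriv f t‖ ≤ C * |τ|^2 := by
  have hf' : ContDiff ℝ 1 (deriv f) :=
    (contDiff_succ_iff_deriv.mp (show ContDiff ℝ (1+1) f by norm_num [hf])).2.2
  obtain ⟨K, s, hs, hlip⟩ := (hf'.contDiffAt (x := t)).exists_lipschitzOnWith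
  obtain ⟨ε, hε, hball⟩ := Metric.mem_nhds_iff.mp hs
  refine ⟨K, K.coe_nonneg, ε, hε, fun τ hτ => ?_⟩
  set F : ℝ → ℂ := fun σ => f (t+σ) - f t - (σ:ℂ) * deriv f t with hF
  have hmem : ∀ σ : ℝ, σ ∈ Metric.closedBall (0:ℝ) |τ| → t + σ ∈ s := by
    intro σ hσ
    apply hball
    simp only [Metric.mem_closedBall, Real.dist_eq, sub_zero] at hσ
    simp only [Metric.mem_ball, Real.dist_eq, add_sub_cancel_left]
    exact lt_of_le_of_lt hσ hτ
  have hder : ∀ σ ∈ Metric.closedBall (0:ℝ) |τ|,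
      HasDerivWithinAt F (deriv f (t+σ) - deriv f t) (Metric.closedBall (0:ℝ) |τ|) σ := by
    intro σ hσ
    have h1 : HasDerivAt (fun σ : ℝ => f (t+σ)) (deriv f (t+σ)) σ :=
      HasDerivAt.comp_const_add t σ ((hf.differentiable (by norm_num) (t+σ)).hasDerivAt)
    have h2 : HasDerivAt (fun σ : ℝ => (σ:ℂ) * deriv f t) (deriv f t) σ := by
      simpa using (Complex.ofRealCLM.hasDerivAt (x := σ)).mul_const (deriv f t)
    exact ((h1.sub_const (f t)).sub h2).hasDerivWithinAt
  have hbound : ∀ σ ∈ Metric.closedBall (0:ℝ) |τ|, ‖deriv f (t+σ) - deriv f t‖ ≤ K * |τ| := by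
    intro σ hσ
    have h3 := hlip.norm_sub_le (hmem σ hσ) (hball (Metric.mem_ball_self hε))
    simp only [add_sub_cancel_left] at h3
    refine h3.trans ?_
    have h4 : |σ| ≤ |τ| := by simpa [Real.dist_eq] using hσ
    exact mul_le_mul_of_nonneg_left (by simpa using h4) K.coe_nonneg
  have hmain := Convex.norm_image_sub_le_of_norm_hasDerivWithin_le hder hbound
    (convex_closedBall _ _) (Metric.mem_closedBall_self (abs_nonneg τ))
    (show τ ∈ Metric.closedBall (0:ℝ) |τ| by simp [Real.dist_eq])
  have hF0 : F 0 = 0 := by simp [hF]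
  rw [hF0, sub_zero] at hmain
  calc ‖F τ‖ ≤ (K:ℝ) * |τ| * ‖τ - 0‖ := hmain
    _ = K * |τ|^2 := by rw [sub_zero, Real.norm_eq_abs]; ring

open Asymptotics in
private lemma core3 (f : ℝ → ℂ) (hf : ContDiff ℝ 3 f) (t : ℝ) :
    ∃ C : ℝ, 0 ≤ C ∧ ∃ ε > (0:ℝ), ∀ τ : ℝ, |τ| < ε →
      ‖f (t+τ) - f t - (τ:ℂ) * deriv f t - (τ:ℂ)^2/2 * deriv (deriv f) t‖ ≤ C * |τ|^3 := by
  have hf' : ContDiff ℝ 2 (deriv f) :=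
    (contDiff_succ_iff_deriv.mp (show ContDiff ℝ (2+1) f by norm_num [hf])).2.2
  obtain ⟨C, hC, ε, hε, hb⟩ := core2 (deriv f) hf' t
  refine ⟨C, hC, ε, hε, fun τ hτ => ?_⟩
  set c₁ := deriv f t
  set c₂ := deriv (deriv f) t
  set F : ℝ → ℂ := fun σ => f (t+σ) - f t - (σ:ℂ) * c₁ - (σ:ℂ)^2/2 * c₂ with hF
  have hder : ∀ σ ∈ Metric.closedBall (0:ℝ) |τ|,
      HasDerivWithinAt F (deriv f (t+σ) - c₁ - (σ:ℂ) * c₂) (Metric.closedBall (0:ℝ) |τ|) σ := by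
    intro σ hσ
    have h1 : HasDerivAt (fun σ : ℝ => f (t+σ)) (deriv f (t+σ)) σ :=
      HasDerivAt.comp_const_add t σ ((hf.differentiable (by norm_num) (t+σ)).hasDerivAt)
    have ho : HasDerivAt (fun σ : ℝ => (σ:ℂ)) 1 σ := by
      simpa using (hasDerivAt_id σ).ofReal_comp
    have h2 : HasDerivAt (fun σ : ℝ => (σ:ℂ) * c₁) c₁ σ := by simpa using ho.mul_const c₁
    have h3 : HasDerivAt (fun σ : ℝ => (σ:ℂ)^2/2 * c₂) ((σ:ℂ) * c₂) σ := by
      have := (ho.mul ho).mul_const (c₂/2)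
      have heq : (fun σ : ℝ => ((σ:ℂ)*(σ:ℂ)) * (c₂/2)) = fun σ : ℝ => (σ:ℂ)^2/2 * c₂ := by
        funext σ; ring
      simp only [Pi.mul_apply] at this; rw [heq] at this
      exact this.congr_deriv (by ring)
    exact (((h1.sub_const (f t)).sub h2).sub h3).hasDerivWithinAt
  have hbound : ∀ σ ∈ Metric.closedBall (0:ℝ) |τ|,
      ‖deriv f (t+σ) - c₁ - (σ:ℂ) * c₂‖ ≤ C * |τ|^2 := by
    intro σ hσ
    have h4 : |σ| ≤ |τ| := by simpa [Real.dist_eq] using hσ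
    have := hb σ (lt_of_le_of_lt h4 hτ)
    refine this.trans ?_
    have : |σ|^2 ≤ |τ|^2 := by gcongr
    nlinarith [abs_nonneg σ, abs_nonneg τ]
  have hmain := Convex.norm_image_sub_le_of_norm_hasDerivWithin_le hder hbound
    (convex_closedBall _ _) (Metric.mem_closedBall_self (abs_nonneg τ))
    (show τ ∈ Metric.closedBall (0:ℝ) |τ| by simp [Real.dist_eq])
  have hF0 : F 0 = 0 := by simp [hF]
  rw [hF0, sub_zero] at hmain
  calc ‖F τ‖ ≤ C * |τ|^2 * ‖τ - 0‖ := hmain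
    _ = C * |τ|^3 := by rw [sub_zero, Real.norm_eq_abs]; ring

/-- The local truncation error of the Leapfrog scheme for the cubic nonlinear
Schrödinger equation is `O(τ²)` as `τ → 0⁺`. Here `v(t) = u(x₀,t)` and
`w(t) = Δu(x₀,t)` for a smooth solution `u` of `i u_t + Δu = λ|u|²u`. -/
theorem leapfrog_truncation_error
    (lam : ℝ) (v w : ℝ → ℂ)
    (hv : ContDiff ℝ 3 v) (hw : ContDiff ℝ 2 w)
    (hpde : ∀ t : ℝ, Complex.I * deriv v t
      = -w t + (lam : ℂ) * ((‖v t‖^2 : ℝ) : ℂ) * v t)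
    (t₀ : ℝ) :
    (fun τ : ℝ =>
        (Complex.I / (2 * (τ : ℂ))) * (v (t₀ + τ) - v (t₀ - τ))
        + (1/4 : ℂ) * (w (t₀ + τ) + 2 * w t₀ + w (t₀ - τ))
        - ((lam : ℂ)/8) *
            (((‖(v t₀ + v (t₀ - τ)) / 2‖^2
              + ‖(v (t₀ + τ) + v t₀) / 2‖^2 : ℝ)) : ℂ)
            * (v (t₀ + τ) + 2 * v t₀ + v (t₀ - τ)))
      =O[𝓝[>] (0 : ℝ)] (fun τ : ℝ => τ^2) := by
  set g : ℝ → ℂ := fun τ => ((lam : ℂ)/8) *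
      (((‖(v t₀ + v (t₀ - τ)) / 2‖^2
        + ‖(v (t₀ + τ) + v t₀) / 2‖^2 : ℝ)) : ℂ)
      * (v (t₀ + τ) + 2 * v t₀ + v (t₀ - τ)) with hgdef
  -- smoothness of g
  have hvp : ContDiff ℝ 2 (fun τ : ℝ => v (t₀ + τ)) :=
    (hv.of_le (by norm_num)).comp (contDiff_const.add contDiff_id)
  have hvm : ContDiff ℝ 2 (fun τ : ℝ => v (t₀ - τ)) :=
    (hv.of_le (by norm_num)).comp (contDiff_const.sub contDiff_id)
  have habs : ∀ z : ℝ → ℂ, ContDiff ℝ 2 z →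
      ContDiff ℝ 2 (fun τ => ‖z τ‖^2) := by
    intro z hz
    have heq : (fun τ => ‖z τ‖^2) = fun τ => (z τ).re^2 + (z τ).im^2 := by
      funext τ; rw [Complex.sq_norm, Complex.normSq_apply]; ring
    rw [heq]
    exact ((Complex.reCLM.contDiff.comp hz).pow 2).add ((Complex.imCLM.contDiff.comp hz).pow 2)
  have hg2 : ContDiff ℝ 2 g := by
    refine (contDiff_const.mul (Complex.ofRealCLM.contDiff.comp ?_)).mul
      ((hvp.add contDiff_const).add hvm)
    exact (habs _ ((contDiff_const.add hvm).div_const 2)).add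
      (habs _ ((hvp.add contDiff_const).div_const 2))
  -- value at 0
  have g0 : g 0 = (lam : ℂ) * ((‖v t₀‖^2 : ℝ) : ℂ) * v t₀ := by
    simp only [hgdef, add_zero, sub_zero, add_self_div_two]
    push_cast
    ring
  -- evenness
  have geven : ∀ τ : ℝ, g (-τ) = g τ := by
    intro τ
    simp only [hgdef]
    rw [show t₀ + -τ = t₀ - τ by ring, show t₀ - -τ = t₀ + τ by ring,
      add_comm (v t₀) (v (t₀ + τ)), add_comm (v (t₀ - τ)) (v t₀)]
    push_cast
    ring
  obtain ⟨C₁, hC₁, ε₁, hε₁, hA⟩ := core3 v hv t₀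
  obtain ⟨C₂, hC₂, ε₂, hε₂, hB⟩ := core2 w hw t₀
  obtain ⟨C₃, hC₃, ε₃, hε₃, hG⟩ := core2 g hg2 0
  set v₁ := deriv v t₀
  set v₂ := deriv (deriv v) t₀
  set w₁ := deriv w t₀
  set d := deriv g 0
  set A : ℝ → ℂ := fun τ => v (t₀ + τ) - v t₀ - (τ:ℂ) * v₁ - (τ:ℂ)^2/2 * v₂ with hAdef
  set B : ℝ → ℂ := fun τ => w (t₀ + τ) - w t₀ - (τ:ℂ) * w₁ with hBdef
  set G : ℝ → ℂ := fun τ => g τ - g 0 - (τ:ℂ) * d with hGdef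
  have key : ∀ τ : ℝ, τ ≠ 0 →
      (Complex.I / (2 * (τ : ℂ))) * (v (t₀ + τ) - v (t₀ - τ))
        + (1/4 : ℂ) * (w (t₀ + τ) + 2 * w t₀ + w (t₀ - τ)) - g τ
      = (Complex.I / (2 * (τ : ℂ))) * (A τ - A (-τ))
        + (1/4 : ℂ) * (B τ + B (-τ)) - (1/2 : ℂ) * (G τ + G (-τ)) := by
    intro τ hτ
    have hτc : (τ : ℂ) ≠ 0 := Complex.ofReal_ne_zero.mpr hτ
    simp only [hAdef, hBdef, hGdef, geven τ, g0,
      show t₀ + -τ = t₀ - τ by ring, show t₀ - -τ = t₀ + τ by ring]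
    have hp := hpde t₀
    push_cast at hp ⊢
    field_simp
    linear_combination (16 * (τ:ℂ)) * hp
  rw [Asymptotics.isBigO_iff]
  refine ⟨C₁ + C₂/2 + C₃, ?_⟩
  have hδ : min ε₁ (min ε₂ ε₃) > 0 := lt_min hε₁ (lt_min hε₂ hε₃)
  filter_upwards [Ioo_mem_nhdsGT_of_mem (Set.mem_Ico.mpr ⟨le_refl (0:ℝ), hδ⟩)] with τ hτ
  obtain ⟨hτ0, hτδ⟩ := hτ
  have hτ1 : |τ| < ε₁ := by rw [abs_of_pos hτ0]; exact hτδ.trans_le (min_le_left _ _)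
  have hτ2 : |τ| < ε₂ := by
    rw [abs_of_pos hτ0]; exact hτδ.trans_le ((min_le_right _ _).trans (min_le_left _ _))
  have hτ3 : |τ| < ε₃ := by
    rw [abs_of_pos hτ0]; exact hτδ.trans_le ((min_le_right _ _).trans (min_le_right _ _))
  have habsτ : |τ| = τ := abs_of_pos hτ0
  rw [key τ (ne_of_gt hτ0)]
  have hAτ : ‖A τ - A (-τ)‖ ≤ 2 * C₁ * τ^3 := by
    have h1 := hA τ hτ1
    have h2 := hA (-τ) (by rwa [abs_neg])
    rw [abs_neg] at h2
    calc ‖A τ - A (-τ)‖ ≤ ‖A τ‖ + ‖A (-τ)‖ := norm_sub_le _ _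
      _ ≤ C₁ * |τ|^3 + C₁ * |τ|^3 := by
          refine add_le_add ?_ ?_
          · simpa [hAdef] using h1
          · simpa [hAdef] using h2
      _ = 2 * C₁ * τ^3 := by rw [habsτ]; ring
  have hBτ : ‖B τ + B (-τ)‖ ≤ 2 * C₂ * τ^2 := by
    have h1 := hB τ hτ2
    have h2 := hB (-τ) (by rwa [abs_neg])
    rw [abs_neg] at h2
    calc ‖B τ + B (-τ)‖ ≤ ‖B τ‖ + ‖B (-τ)‖ := norm_add_le _ _
      _ ≤ C₂ * |τ|^2 + C₂ * |τ|^2 := by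
          refine add_le_add ?_ ?_
          · simpa [hBdef] using h1
          · simpa [hBdef] using h2
      _ = 2 * C₂ * τ^2 := by rw [habsτ]; ring
  have hGτ : ‖G τ + G (-τ)‖ ≤ 2 * C₃ * τ^2 := by
    have h1 := hG τ hτ3
    have h2 := hG (-τ) (by rwa [abs_neg])
    rw [abs_neg] at h2
    simp only [zero_add] at h1 h2
    calc ‖G τ + G (-τ)‖ ≤ ‖G τ‖ + ‖G (-τ)‖ := norm_add_le _ _
      _ ≤ C₃ * |τ|^2 + C₃ * |τ|^2 := by
          refine add_le_add ?_ ?_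
          · simpa [hGdef] using h1
          · simpa [hGdef] using h2
      _ = 2 * C₃ * τ^2 := by rw [habsτ]; ring
  have hnormI : ‖Complex.I / (2 * (τ:ℂ))‖ = 1 / (2*τ) := by
    rw [norm_div, Complex.norm_I, norm_mul, Complex.norm_real, Real.norm_eq_abs, habsτ]
    norm_num
  calc ‖Complex.I / (2 * (τ:ℂ)) * (A τ - A (-τ)) + (1/4:ℂ) * (B τ + B (-τ))
        - (1/2:ℂ) * (G τ + G (-τ))‖
      ≤ ‖Complex.I / (2 * (τ:ℂ)) * (A τ - A (-τ))‖ + ‖(1/4:ℂ) * (B τ + B (-τ))‖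
        + ‖(1/2:ℂ) * (G τ + G (-τ))‖ := by
        refine (norm_sub_le _ _).trans ?_
        gcongr
        exact norm_add_le _ _
    _ ≤ (1/(2*τ)) * (2 * C₁ * τ^3) + (1/4) * (2 * C₂ * τ^2) + (1/2) * (2 * C₃ * τ^2) := by
        have e1 : ‖(1/4:ℂ)‖ = 1/4 := by norm_num
        have e2 : ‖(1/2:ℂ)‖ = 1/2 := by norm_num
        rw [norm_mul, norm_mul, norm_mul, hnormI, e1, e2]
        have hpos : (0:ℝ) ≤ 1/(2*τ) := le_of_lt (by positivity)
        exact add_le_add (add_le_add (mul_le_mul_of_nonneg_left hAτ hpos)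
          (mul_le_mul_of_nonneg_left hBτ (by norm_num)))
          (mul_le_mul_of_nonneg_left hGτ (by norm_num))
    _ = (C₁ + C₂/2 + C₃) * ‖τ^2‖ := by
        have hne : τ ≠ 0 := ne_of_gt hτ0
        rw [Real.norm_eq_abs, abs_of_nonneg (sq_nonneg τ)]
        field_simp
        ring
end

section
/- Let t₀ ∈ ℝ. For g : ℝ → ℂ define R̃_g(t, τ) := (−g(t) + 7·g(t−τ) + 7·g(t−2τ) − g(t−3τ))/12. Then the four-step symmetric scheme's local truncation error, i.e. the function TE(τ) := (i/τ)·(R̃_v(t₀+τ, τ) − R̃_v(t₀, τ)) + (1/2)·(R̃_w(t₀+τ, τ) + R̃_w(t₀, τ)) − (λ/4)·( |R̃_v(t₀+τ, τ)|² + |R̃_v(t₀, τ)|² )·(R̃_v(t₀+τ, τ) + R̃_v(t₀, τ)), is O(τ²) as τ → 0⁺, i.e. TE =O[𝓝[>]0] (fun τ => τ²). -/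
open Filter Topology

/-- The four-step symmetric combination
`R̃_g(t, τ) = (−g(t) + 7g(t−τ) + 7g(t−2τ) − g(t−3τ))/12`. -/
noncomputable def RtildeSym (g : ℝ → ℂ) (t τ : ℝ) : ℂ :=
  (-g t + 7 * g (t - τ) + 7 * g (t - 2*τ) - g (t - 3*τ)) / 12

open Asymptotics


noncomputable def nseSv (g : ℝ → ℂ) (t₀ τ : ℝ) : ℂ :=
  (-g (t₀ + 1*τ) + 7*g t₀ + 7*g (t₀ + (-1)*τ) - g (t₀ + (-2)*τ))/12

noncomputable def nseRv (g : ℝ → ℂ) (t₀ τ : ℝ) : ℂ :=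
  (-g t₀ + 7*g (t₀ + (-1)*τ) + 7*g (t₀ + (-2)*τ) - g (t₀ + (-3)*τ))/12

noncomputable def nseSv' (g1 : ℝ → ℂ) (t₀ τ : ℝ) : ℂ :=
  (-g1 (t₀ + 1*τ) - 7*g1 (t₀ + (-1)*τ) + 2*g1 (t₀ + (-2)*τ))/12

noncomputable def nseRv' (g1 : ℝ → ℂ) (t₀ τ : ℝ) : ℂ :=
  (-7*g1 (t₀ + (-1)*τ) - 14*g1 (t₀ + (-2)*τ) + 3*g1 (t₀ + (-3)*τ))/12

noncomputable def nseSv'' (g2 : ℝ → ℂ) (t₀ τ : ℝ) : ℂ :=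
  (-g2 (t₀ + 1*τ) + 7*g2 (t₀ + (-1)*τ) - 4*g2 (t₀ + (-2)*τ))/12

noncomputable def nseRv'' (g2 : ℝ → ℂ) (t₀ τ : ℝ) : ℂ :=
  (7*g2 (t₀ + (-1)*τ) + 28*g2 (t₀ + (-2)*τ) - 9*g2 (t₀ + (-3)*τ))/12

/-- composition with affine map -/
lemma nse_aux_affine {g g' : ℝ → ℂ} (hg : ∀ t, HasDerivAt g (g' t) t) (a b τ : ℝ) :
    HasDerivAt (fun τ : ℝ => g (a + b * τ)) ((b : ℂ) * g' (a + b * τ)) τ := by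
  have h1 : HasDerivAt (fun τ : ℝ => a + b * τ) b τ := by
    simpa using ((hasDerivAt_id τ).const_mul b).const_add a
  have := HasDerivAt.scomp (x := τ) (h := fun τ : ℝ => a + b * τ) (hg (a + b * τ)) h1
  simp only [Function.comp_def, Complex.real_smul] at this
  exact this

lemma nseSv_hasDeriv {g g1 : ℝ → ℂ} (hg : ∀ t, HasDerivAt g (g1 t) t) (t₀ τ : ℝ) :
    HasDerivAt (fun τ => nseSv g t₀ τ) (nseSv' g1 t₀ τ) τ := by
  unfold nseSv nseSv'
  have H := ((((nse_aux_affine hg t₀ 1 τ).neg.add_const (7*g t₀)).add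
    ((nse_aux_affine hg t₀ (-1) τ).const_mul 7)).sub
    (nse_aux_affine hg t₀ (-2) τ)).div_const 12
  refine H.congr_deriv ?_
  push_cast; ring

lemma nseRv_hasDeriv {g g1 : ℝ → ℂ} (hg : ∀ t, HasDerivAt g (g1 t) t) (t₀ τ : ℝ) :
    HasDerivAt (fun τ => nseRv g t₀ τ) (nseRv' g1 t₀ τ) τ := by
  unfold nseRv nseRv'
  have H := (((((nse_aux_affine hg t₀ (-1) τ).const_mul 7).const_add (-g t₀)).add
    ((nse_aux_affine hg t₀ (-2) τ).const_mul 7)).sub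
    (nse_aux_affine hg t₀ (-3) τ)).div_const 12
  refine H.congr_deriv ?_
  push_cast; ring

lemma nseSv'_hasDeriv {g1 g2 : ℝ → ℂ} (hg : ∀ t, HasDerivAt g1 (g2 t) t) (t₀ τ : ℝ) :
    HasDerivAt (fun τ => nseSv' g1 t₀ τ) (nseSv'' g2 t₀ τ) τ := by
  unfold nseSv' nseSv''
  have H := (((nse_aux_affine hg t₀ 1 τ).neg.sub
    ((nse_aux_affine hg t₀ (-1) τ).const_mul 7)).add
    ((nse_aux_affine hg t₀ (-2) τ).const_mul 2)).div_const 12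
  refine H.congr_deriv ?_
  push_cast; ring

lemma nseRv'_hasDeriv {g1 g2 : ℝ → ℂ} (hg : ∀ t, HasDerivAt g1 (g2 t) t) (t₀ τ : ℝ) :
    HasDerivAt (fun τ => nseRv' g1 t₀ τ) (nseRv'' g2 t₀ τ) τ := by
  unfold nseRv' nseRv''
  have H := ((((nse_aux_affine hg t₀ (-1) τ).const_mul (-7)).sub
    ((nse_aux_affine hg t₀ (-2) τ).const_mul 14)).add
    ((nse_aux_affine hg t₀ (-3) τ).const_mul 3)).div_const 12
  refine H.congr_deriv ?_
  push_cast; ring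

lemma nse_aux_ofReal (τ : ℝ) : HasDerivAt (fun τ : ℝ => (τ : ℂ)) 1 τ := by
  have := Complex.ofRealCLM.hasDerivAt (x := τ)
  simp at this
  exact this

/-- differentiable at 0, vanishing at 0 ⇒ O(τ) -/
lemma nse_aux_bigO_id {f : ℝ → ℂ} (hd : DifferentiableAt ℝ f 0) (h0 : f 0 = 0) :
    f =O[nhds 0] fun τ : ℝ => τ := by
  have h := hasDerivAt_iff_isLittleO.mp hd.hasDerivAt
  simp only [h0, sub_zero] at h
  have h2 : (fun x : ℝ => x • deriv f 0) =O[nhds 0] fun τ : ℝ => τ := by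
    apply isBigO_iff.mpr ⟨‖deriv f 0‖, ?_⟩
    filter_upwards with x
    simp [norm_smul, mul_comm]
  have := h.isBigO.add h2
  simpa using this

/-- integrate a big-O bound -/
lemma nse_aux_int {f f' : ℝ → ℂ} (hd : ∀ s, HasDerivAt f (f' s) s) (h0 : f 0 = 0)
    {n : ℕ} (h : f' =O[nhds 0] fun s : ℝ => s ^ n) :
    f =O[nhds 0] fun s : ℝ => s ^ (n + 1) := by
  obtain ⟨C, hC⟩ := h.bound
  rw [Metric.eventually_nhds_iff] at hC
  obtain ⟨ε, εpos, hε⟩ := hC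
  apply isBigO_iff.mpr ⟨max C 0, ?_⟩
  filter_upwards [Metric.ball_mem_nhds (0 : ℝ) εpos] with τ hτ
  have hτ' : |τ| < ε := by simpa [Real.dist_eq] using hτ
  have key : ‖f τ - f 0‖ ≤ (max C 0 * |τ| ^ n) * ‖τ - 0‖ := by
    apply Convex.norm_image_sub_le_of_norm_hasDerivWithin_le
      (f' := f') (s := Set.Icc (-|τ|) |τ|)
    · exact fun x _ => (hd x).hasDerivWithinAt
    · intro x hx
      have hxτ : |x| ≤ |τ| := abs_le.mpr ⟨hx.1, hx.2⟩
      have hxε : dist x 0 < ε := by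
        rw [Real.dist_eq, sub_zero]; exact lt_of_le_of_lt hxτ hτ'
      calc ‖f' x‖ ≤ C * ‖x ^ n‖ := hε hxε
        _ ≤ max C 0 * |τ| ^ n := by
            rw [Real.norm_eq_abs, abs_pow]
            have h1 : C * |x| ^ n ≤ max C 0 * |x| ^ n :=
              mul_le_mul_of_nonneg_right (le_max_left _ _) (by positivity)
            refine h1.trans (mul_le_mul_of_nonneg_left ?_ (le_max_right _ _))
            exact pow_le_pow_left₀ (abs_nonneg _) hxτ n
    · exact convex_Icc _ _
    · constructor <;> simp [abs_nonneg, neg_nonpos]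
    · exact ⟨neg_abs_le τ, le_abs_self τ⟩
  rw [h0, sub_zero, sub_zero] at key
  calc ‖f τ‖ ≤ max C 0 * |τ| ^ n * |τ| := by simpa [Real.norm_eq_abs] using key
    _ = max C 0 * ‖τ ^ (n + 1)‖ := by rw [Real.norm_eq_abs, abs_pow, pow_succ]; ring

/-- abstract third-order vanishing lemma -/
lemma nse_key {A A' A'' B B' : ℝ → ℂ}
    (dA : ∀ τ, HasDerivAt A (A' τ) τ) (dA' : ∀ τ, HasDerivAt A' (A'' τ) τ)
    (dA''0 : DifferentiableAt ℝ A'' 0)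
    (dB : ∀ τ, HasDerivAt B (B' τ) τ) (dB'0 : DifferentiableAt ℝ B' 0)
    (hA0 : A 0 = 0) (hc1 : A' 0 + B 0 = 0) (hc2 : A'' 0 + 2 * B' 0 = 0) :
    (fun τ : ℝ => A τ + (τ : ℂ) * B τ) =O[nhds 0] fun τ : ℝ => τ ^ 3 := by
  -- the A-part
  have dAbar : ∀ τ : ℝ, HasDerivAt
      (fun τ : ℝ => A τ - (τ : ℂ) * A' 0 - (τ : ℂ)^2/2 * A'' 0)
      (A' τ - A' 0 - (τ : ℂ) * A'' 0) τ := by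
    intro τ
    have h1 := (nse_aux_ofReal τ).mul_const (A' 0)
    have h2 := ((((nse_aux_ofReal τ).mul (nse_aux_ofReal τ))).div_const 2).mul_const (A'' 0)
    have H := ((dA τ).sub h1).sub h2
    convert H using 1
    · rfl
    · funext x; simp only [Pi.sub_apply, Pi.mul_apply]; push_cast; ring
    · push_cast; ring
  have dAbar' : ∀ τ : ℝ, HasDerivAt
      (fun τ : ℝ => A' τ - A' 0 - (τ : ℂ) * A'' 0) (A'' τ - A'' 0) τ := by
    intro τ
    have H := ((dA' τ).sub_const (A' 0)).sub ((nse_aux_ofReal τ).mul_const (A'' 0))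
    refine H.congr_deriv ?_
    ring
  have hAbar'' : (fun τ : ℝ => A'' τ - A'' 0) =O[nhds 0] fun τ : ℝ => τ :=
    nse_aux_bigO_id (dA''0.sub_const _) (by simp)
  have hAbar' : (fun τ : ℝ => A' τ - A' 0 - (τ : ℂ) * A'' 0) =O[nhds 0]
      fun τ : ℝ => τ ^ 2 := by
    have := nse_aux_int dAbar' (by simp) (n := 1) (by simpa using hAbar'')
    simpa using this
  have hAbar : (fun τ : ℝ => A τ - (τ : ℂ) * A' 0 - (τ : ℂ)^2/2 * A'' 0) =O[nhds 0]
      fun τ : ℝ => τ ^ 3 := by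
    have := nse_aux_int dAbar (by simp [hA0]) (n := 2) hAbar'
    simpa using this
  -- the B-part
  have dBbar : ∀ τ : ℝ, HasDerivAt
      (fun τ : ℝ => B τ - B 0 - (τ : ℂ) * B' 0) (B' τ - B' 0) τ := by
    intro τ
    have H := ((dB τ).sub_const (B 0)).sub ((nse_aux_ofReal τ).mul_const (B' 0))
    refine H.congr_deriv ?_
    ring
  have hBbar' : (fun τ : ℝ => B' τ - B' 0) =O[nhds 0] fun τ : ℝ => τ :=
    nse_aux_bigO_id (dB'0.sub_const _) (by simp)
  have hBbar : (fun τ : ℝ => B τ - B 0 - (τ : ℂ) * B' 0) =O[nhds 0]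
      fun τ : ℝ => τ ^ 2 := by
    have := nse_aux_int dBbar (by simp) (n := 1) (by simpa using hBbar')
    simpa using this
  have hid : (fun τ : ℝ => (τ : ℂ)) =O[nhds (0:ℝ)] fun τ : ℝ => τ := by
    apply isBigO_iff.mpr ⟨1, ?_⟩
    filter_upwards with x
    simp
  have hmul : (fun τ : ℝ => (τ : ℂ) * (B τ - B 0 - (τ : ℂ) * B' 0)) =O[nhds 0]
      fun τ : ℝ => τ ^ 3 := by
    have := hid.mul hBbar
    refine this.trans (isBigO_of_le _ fun x => ?_)
    simp [abs_mul, ← pow_succ']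
  have := hAbar.add hmul
  refine this.congr_left fun τ => ?_
  have e1 : A' 0 = -B 0 := by linear_combination hc1
  have e2 : A'' 0 = -2 * B' 0 := by linear_combination hc2
  rw [e1, e2]; ring

/-- The local truncation error of the four-step symmetric scheme for the cubic
nonlinear Schrödinger equation is `O(τ²)` as `τ → 0⁺`. Here `v(t) = u(x₀,t)` and
`w(t) = Δu(x₀,t)` for a smooth solution `u` of `i u_t + Δu = λ|u|²u`. -/
theorem four_step_symmetric_truncation_error
    (lam : ℝ) (v w : ℝ → ℂ)
    (hv : ContDiff ℝ 3 v) (hw : ContDiff ℝ 2 w)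
    (hpde : ∀ t : ℝ, Complex.I * deriv v t
      = -w t + (lam : ℂ) * ((‖v t‖^2 : ℝ) : ℂ) * v t)
    (t₀ : ℝ) :
    (fun τ : ℝ =>
        (Complex.I / (τ : ℂ)) * (RtildeSym v (t₀ + τ) τ - RtildeSym v t₀ τ)
        + (1/2 : ℂ) * (RtildeSym w (t₀ + τ) τ + RtildeSym w t₀ τ)
        - ((lam : ℂ)/4) *
            (((‖RtildeSym v (t₀ + τ) τ‖^2
              + ‖RtildeSym v t₀ τ‖^2 : ℝ)) : ℂ)
            * (RtildeSym v (t₀ + τ) τ + RtildeSym v t₀ τ))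
      =O[𝓝[>] (0 : ℝ)] (fun τ : ℝ => τ^2) := by
  -- regularity bookkeeping
  have hvd : Differentiable ℝ v := hv.differentiable (by norm_num)
  have hv1 : ContDiff ℝ 2 (deriv v) := by
    have h : ContDiff ℝ ((2:WithTop ℕ∞)+1) v := by
      have e : ((2:WithTop ℕ∞)+1) = 3 := by norm_num
      rw [e]; exact hv
    exact (contDiff_succ_iff_deriv.mp h).2.2
  have hv1d : Differentiable ℝ (deriv v) := hv1.differentiable (by norm_num)
  have hv2 : ContDiff ℝ 1 (deriv (deriv v)) := by
    have h : ContDiff ℝ ((1:WithTop ℕ∞)+1) (deriv v) := by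
      have e : ((1:WithTop ℕ∞)+1) = 2 := by norm_num
      rw [e]; exact hv1
    exact (contDiff_succ_iff_deriv.mp h).2.2
  have hv2d : Differentiable ℝ (deriv (deriv v)) := hv2.differentiable (by norm_num)
  have hwd : Differentiable ℝ w := hw.differentiable (by norm_num)
  have hw1 : ContDiff ℝ 1 (deriv w) := by
    have h : ContDiff ℝ ((1:WithTop ℕ∞)+1) w := by
      have e : ((1:WithTop ℕ∞)+1) = 2 := by norm_num
      rw [e]; exact hw
    exact (contDiff_succ_iff_deriv.mp h).2.2
  have hw1d : Differentiable ℝ (deriv w) := hw1.differentiable (by norm_num)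
  have Dv : ∀ t, HasDerivAt v (deriv v t) t := fun t => (hvd t).hasDerivAt
  have Dv1 : ∀ t, HasDerivAt (deriv v) (deriv (deriv v) t) t := fun t => (hv1d t).hasDerivAt
  have Dw : ∀ t, HasDerivAt w (deriv w t) t := fun t => (hwd t).hasDerivAt
  have Dw1 : ∀ t, HasDerivAt (deriv w) (deriv (deriv w) t) t := fun t => (hw1d t).hasDerivAt
  -- value-at-zero lemmas
  have hSv0 : ∀ g : ℝ → ℂ, nseSv g t₀ 0 = g t₀ := fun g => by
    simp only [nseSv, mul_zero, add_zero]; ring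
  have hRv0 : ∀ g : ℝ → ℂ, nseRv g t₀ 0 = g t₀ := fun g => by
    simp only [nseRv, mul_zero, add_zero]; ring
  have hSv'0 : ∀ g : ℝ → ℂ, nseSv' g t₀ 0 = -(1/2)*g t₀ := fun g => by
    simp only [nseSv', mul_zero, add_zero]; ring
  have hRv'0 : ∀ g : ℝ → ℂ, nseRv' g t₀ 0 = -(3/2)*g t₀ := fun g => by
    simp only [nseRv', mul_zero, add_zero]; ring
  have hSv''0 : ∀ g : ℝ → ℂ, nseSv'' g t₀ 0 = (1/6)*g t₀ := fun g => by
    simp only [nseSv'', mul_zero, add_zero]; ring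
  have hRv''0 : ∀ g : ℝ → ℂ, nseRv'' g t₀ 0 = (13/6)*g t₀ := fun g => by
    simp only [nseRv'', mul_zero, add_zero]; ring
  -- PDE in star form and its derivative
  have habs : ∀ z : ℂ, ((‖z‖^2 : ℝ) : ℂ) = z * star z := fun z => by
    rw [Complex.sq_norm, ← Complex.mul_conj, starRingEnd_apply]
  have hpde' : ∀ t, Complex.I * deriv v t = -w t + (lam:ℂ) * (v t * star (v t)) * v t :=
    fun t => by rw [hpde t, habs (v t)]
  have hfun : (fun t => Complex.I * deriv v t)
      = fun t => -w t + (lam:ℂ) * (v t * star (v t)) * v t := funext hpde'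
  have hpde2 : ∀ t, Complex.I * deriv (deriv v) t
      = -(deriv w t) + (((lam:ℂ) * (deriv v t * star (v t) + v t * star (deriv v t))) * v t
        + ((lam:ℂ) * (v t * star (v t))) * deriv v t) := by
    intro t
    have hL : HasDerivAt (fun t => Complex.I * deriv v t) (Complex.I * deriv (deriv v) t) t :=
      (Dv1 t).const_mul Complex.I
    rw [hfun] at hL
    have hR : HasDerivAt (fun t => -w t + (lam:ℂ) * (v t * star (v t)) * v t)
        (-(deriv w t) + (((lam:ℂ) * (deriv v t * star (v t) + v t * star (deriv v t))) * v t
          + ((lam:ℂ) * (v t * star (v t))) * deriv v t)) t :=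
      ((Dw t).neg).add ((((Dv t).mul (Dv t).star).const_mul (lam:ℂ)).mul (Dv t))
    exact hL.unique hR
  -- derivative structure of A
  have dA : ∀ τ : ℝ, HasDerivAt (fun τ => Complex.I * (nseSv v t₀ τ - nseRv v t₀ τ))
      (Complex.I * (nseSv' (deriv v) t₀ τ - nseRv' (deriv v) t₀ τ)) τ := fun τ =>
    ((nseSv_hasDeriv Dv t₀ τ).sub (nseRv_hasDeriv Dv t₀ τ)).const_mul Complex.I
  have dA' : ∀ τ : ℝ, HasDerivAt (fun τ => Complex.I * (nseSv' (deriv v) t₀ τ - nseRv' (deriv v) t₀ τ))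
      (Complex.I * (nseSv'' (deriv (deriv v)) t₀ τ - nseRv'' (deriv (deriv v)) t₀ τ)) τ := fun τ =>
    ((nseSv'_hasDeriv Dv1 t₀ τ).sub (nseRv'_hasDeriv Dv1 t₀ τ)).const_mul Complex.I
  have dA''0 : DifferentiableAt ℝ
      (fun τ => Complex.I * (nseSv'' (deriv (deriv v)) t₀ τ - nseRv'' (deriv (deriv v)) t₀ τ)) 0 := by
    have : Differentiable ℝ
        (fun τ => Complex.I * (nseSv'' (deriv (deriv v)) t₀ τ - nseRv'' (deriv (deriv v)) t₀ τ)) := by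
      unfold nseSv'' nseRv''
      fun_prop
    exact this 0
  -- derivative structure of B
  have dB : ∀ τ : ℝ, HasDerivAt (fun τ =>
      (1/2 : ℂ)*(nseSv w t₀ τ + nseRv w t₀ τ)
      - ((lam:ℂ)/4)*(nseSv v t₀ τ * star (nseSv v t₀ τ) + nseRv v t₀ τ * star (nseRv v t₀ τ))
        *(nseSv v t₀ τ + nseRv v t₀ τ))
      ((1/2 : ℂ)*(nseSv' (deriv w) t₀ τ + nseRv' (deriv w) t₀ τ)
      - (((lam:ℂ)/4)*((nseSv' (deriv v) t₀ τ * star (nseSv v t₀ τ)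
            + nseSv v t₀ τ * star (nseSv' (deriv v) t₀ τ))
          + (nseRv' (deriv v) t₀ τ * star (nseRv v t₀ τ)
            + nseRv v t₀ τ * star (nseRv' (deriv v) t₀ τ)))
          * (nseSv v t₀ τ + nseRv v t₀ τ)
        + ((lam:ℂ)/4)*(nseSv v t₀ τ * star (nseSv v t₀ τ) + nseRv v t₀ τ * star (nseRv v t₀ τ))
          * (nseSv' (deriv v) t₀ τ + nseRv' (deriv v) t₀ τ))) τ := by
    intro τ
    have hSv := nseSv_hasDeriv Dv t₀ τ
    have hRv := nseRv_hasDeriv Dv t₀ τ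
    have hSw := nseSv_hasDeriv Dw t₀ τ
    have hRw := nseRv_hasDeriv Dw t₀ τ
    exact ((hSw.add hRw).const_mul ((1:ℂ)/2)).sub
      ((((hSv.mul hSv.star).add (hRv.mul hRv.star)).const_mul ((lam:ℂ)/4)).mul (hSv.add hRv))
  have dB'0 : DifferentiableAt ℝ (fun τ : ℝ =>
      (1/2 : ℂ)*(nseSv' (deriv w) t₀ τ + nseRv' (deriv w) t₀ τ)
      - (((lam:ℂ)/4)*((nseSv' (deriv v) t₀ τ * star (nseSv v t₀ τ)
            + nseSv v t₀ τ * star (nseSv' (deriv v) t₀ τ))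
          + (nseRv' (deriv v) t₀ τ * star (nseRv v t₀ τ)
            + nseRv v t₀ τ * star (nseRv' (deriv v) t₀ τ)))
          * (nseSv v t₀ τ + nseRv v t₀ τ)
        + ((lam:ℂ)/4)*(nseSv v t₀ τ * star (nseSv v t₀ τ) + nseRv v t₀ τ * star (nseRv v t₀ τ))
          * (nseSv' (deriv v) t₀ τ + nseRv' (deriv v) t₀ τ))) 0 := by
    have : Differentiable ℝ (fun τ : ℝ =>
      (1/2 : ℂ)*(nseSv' (deriv w) t₀ τ + nseRv' (deriv w) t₀ τ)
      - (((lam:ℂ)/4)*((nseSv' (deriv v) t₀ τ * star (nseSv v t₀ τ)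
            + nseSv v t₀ τ * star (nseSv' (deriv v) t₀ τ))
          + (nseRv' (deriv v) t₀ τ * star (nseRv v t₀ τ)
            + nseRv v t₀ τ * star (nseRv' (deriv v) t₀ τ)))
          * (nseSv v t₀ τ + nseRv v t₀ τ)
        + ((lam:ℂ)/4)*(nseSv v t₀ τ * star (nseSv v t₀ τ) + nseRv v t₀ τ * star (nseRv v t₀ τ))
          * (nseSv' (deriv v) t₀ τ + nseRv' (deriv v) t₀ τ))) := by
      unfold nseSv nseRv nseSv' nseRv'
      fun_prop
    exact this 0
  -- values at zero and the two cancellation identities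
  have hA0 : Complex.I * (nseSv v t₀ 0 - nseRv v t₀ 0) = 0 := by
    rw [hSv0, hRv0]; ring
  have hst : ∀ (c : ℂ) (z : ℂ), star (c * z) = star c * star z := fun c z => star_mul' c z
  have hc1 : Complex.I * (nseSv' (deriv v) t₀ 0 - nseRv' (deriv v) t₀ 0)
      + ((1/2 : ℂ)*(nseSv w t₀ 0 + nseRv w t₀ 0)
        - ((lam:ℂ)/4)*(nseSv v t₀ 0 * star (nseSv v t₀ 0) + nseRv v t₀ 0 * star (nseRv v t₀ 0))
          *(nseSv v t₀ 0 + nseRv v t₀ 0)) = 0 := by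
    rw [hSv'0, hRv'0, hSv0 v, hRv0 v, hSv0 w, hRv0 w]
    linear_combination hpde' t₀
  have hstar1 : star (-(1/2 : ℂ) * deriv v t₀) = -(1/2 : ℂ) * star (deriv v t₀) := by
    rw [star_mul']; simp [mul_comm]
  have hstar3 : star (-(3/2 : ℂ) * deriv v t₀) = -(3/2 : ℂ) * star (deriv v t₀) := by
    rw [star_mul']; simp [mul_comm]
  have hc2 : Complex.I * (nseSv'' (deriv (deriv v)) t₀ 0 - nseRv'' (deriv (deriv v)) t₀ 0)
      + 2 * ((1/2 : ℂ)*(nseSv' (deriv w) t₀ 0 + nseRv' (deriv w) t₀ 0)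
      - (((lam:ℂ)/4)*((nseSv' (deriv v) t₀ 0 * star (nseSv v t₀ 0)
            + nseSv v t₀ 0 * star (nseSv' (deriv v) t₀ 0))
          + (nseRv' (deriv v) t₀ 0 * star (nseRv v t₀ 0)
            + nseRv v t₀ 0 * star (nseRv' (deriv v) t₀ 0)))
          * (nseSv v t₀ 0 + nseRv v t₀ 0)
        + ((lam:ℂ)/4)*(nseSv v t₀ 0 * star (nseSv v t₀ 0) + nseRv v t₀ 0 * star (nseRv v t₀ 0))
          * (nseSv' (deriv v) t₀ 0 + nseRv' (deriv v) t₀ 0))) = 0 := by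
    rw [hSv''0, hRv''0, hSv'0 (deriv v), hRv'0 (deriv v), hSv'0 (deriv w), hRv'0 (deriv w),
      hSv0 v, hRv0 v, hstar1, hstar3]
    linear_combination (-2 : ℂ) * hpde2 t₀
  -- conclude the third-order bound
  have hG := nse_key dA dA' dA''0 dB dB'0 hA0 hc1 hc2
  have h1 := hG.mono (nhdsWithin_le_nhds (s := Set.Ioi (0:ℝ)))
  have hinv : (fun τ : ℝ => ((τ:ℂ))⁻¹) =O[𝓝[>] (0:ℝ)] (fun τ : ℝ => τ⁻¹) := by
    apply Asymptotics.isBigO_iff.mpr ⟨1, ?_⟩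
    filter_upwards with τ
    simp
  have h2 := h1.mul hinv
  refine h2.congr' ?_ ?_
  · filter_upwards [self_mem_nhdsWithin] with τ (hτ : τ ∈ Set.Ioi 0)
    have hτ0 : (τ:ℂ) ≠ 0 := by
      exact_mod_cast ne_of_gt hτ
    have hRt1 : ∀ g : ℝ → ℂ, RtildeSym g (t₀+τ) τ = nseSv g t₀ τ := by
      intro g; unfold RtildeSym nseSv
      rw [show t₀+τ-τ = t₀ by ring, show t₀+τ-2*τ = t₀+(-1)*τ by ring,
          show t₀+τ-3*τ = t₀+(-2)*τ by ring, show (t₀+τ : ℝ) = t₀+1*τ by ring]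
    have hRt2 : ∀ g : ℝ → ℂ, RtildeSym g t₀ τ = nseRv g t₀ τ := by
      intro g; unfold RtildeSym nseRv
      rw [show t₀-τ = t₀+(-1)*τ by ring, show t₀-2*τ = t₀+(-2)*τ by ring,
          show t₀-3*τ = t₀+(-3)*τ by ring]
    rw [hRt1 v, hRt2 v, hRt1 w, hRt2 w]
    simp only [Complex.ofReal_add]
    rw [habs, habs]
    field_simp
    ring
  · filter_upwards [self_mem_nhdsWithin] with τ (hτ : τ ∈ Set.Ioi 0)
    have hτ0 : (τ:ℝ) ≠ 0 := ne_of_gt hτ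
    field_simp
end

section
/- Let k, ω̃, τ, λ ∈ ℝ with τ > 0, and for n ∈ ℤ define uₙ : ℝ → ℂ by uₙ(x) = exp(i·(k·x − ω̃·n·τ)). Suppose that for all n ∈ ℤ and x ∈ ℝ the modified Crank–Nicolson scheme holds: (i/τ)·(u_{n+1}(x) − uₙ(x)) = −(1/2)·(Δu_{n+1}(x) + Δuₙ(x)) + (λ/4)·(|uₙ(x)|² + |u_{n+1}(x)|²)·(u_{n+1}(x) + uₙ(x)). If moreover |ω̃·τ| < π, then ω̃ = (2/τ)·arctan((k² + λ)·τ/2). -/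
/-- Numerical dispersion relation of the modified Crank–Nicolson scheme for the
cubic NLS: if the discrete plane wave `uₙ(x) = exp(i(kx − ω̃nτ))` satisfies the
scheme and `|ω̃τ| < π`, then `ω̃ = (2/τ)·arctan((k² + λ)τ/2)`. -/
theorem crank_nicolson_dispersion_relation
    (k ω τ lam : ℝ) (hτ : 0 < τ)
    (u : ℤ → ℝ → ℂ)
    (hu : ∀ n : ℤ, ∀ x : ℝ, u n x = Complex.exp (Complex.I * ((k*x - ω*n*τ : ℝ) : ℂ)))
    (hscheme : ∀ n : ℤ, ∀ x : ℝ,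
      (Complex.I / (τ : ℂ)) * (u (n+1) x - u n x) =
        -(1/2 : ℂ) * (deriv (deriv (u (n+1))) x + deriv (deriv (u n)) x)
        + ((lam : ℂ)/4) *
            (((‖u n x‖^2 + ‖u (n+1) x‖^2 : ℝ)) : ℂ)
            * (u (n+1) x + u n x))
    (hω : |ω * τ| < Real.pi) :
    ω = (2/τ) * Real.arctan ((k^2 + lam) * τ / 2) := by
  have hufun : ∀ n : ℤ, u n = fun x : ℝ => Complex.exp (Complex.I * ((k*x - ω*n*τ : ℝ) : ℂ)) :=
    fun n => funext (hu n)
  -- derivatives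
  have hd : ∀ (b x : ℝ), HasDerivAt (fun y : ℝ => Complex.exp (Complex.I * ((k*y - b : ℝ) : ℂ)))
      ((Complex.I*k) * Complex.exp (Complex.I * ((k*x - b : ℝ):ℂ))) x := by
    intro b x
    have h0 : HasDerivAt (fun y : ℝ => k*y - b) k x := by
      simpa using ((hasDerivAt_id x).const_mul k).sub_const b
    have h1 : HasDerivAt (fun y : ℝ => ((k*y - b : ℝ):ℂ)) (k:ℂ) x := h0.ofReal_comp
    have h2 := (h1.const_mul Complex.I).cexp
    simpa [mul_comm, mul_assoc, mul_left_comm] using h2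
  have hd2 : ∀ (b x : ℝ),
      deriv (deriv (fun y : ℝ => Complex.exp (Complex.I * ((k*y - b : ℝ) : ℂ)))) x
        = (Complex.I*k)^2 * Complex.exp (Complex.I * ((k*x - b : ℝ):ℂ)) := by
    intro b x
    have h1 : deriv (fun y : ℝ => Complex.exp (Complex.I * ((k*y - b : ℝ) : ℂ)))
        = fun y : ℝ => (Complex.I*k) * Complex.exp (Complex.I * ((k*y - b : ℝ):ℂ)) :=
      funext fun y => (hd b y).deriv
    rw [h1]
    have h2 := ((hd b x).const_mul (Complex.I*k)).deriv
    rw [h2]; ring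
  have E := hscheme 0 0
  rw [hufun (0+1), hufun 0] at E
  simp only [hd2] at E
  norm_num [Complex.norm_exp] at E
  -- now E : I/τ * (e - 1) = -(1/2 * ((I k)^2 e + (I k)^2)) + λ/4 * 2 * (e + 1)
  have hIk : (Complex.I * (k:ℂ))^2 = -((k:ℝ)^2 : ℂ) := by
    rw [mul_pow, Complex.I_sq]; push_cast; ring
  rw [hIk] at E
  have hτC : (τ:ℂ) ≠ 0 := by exact_mod_cast ne_of_gt hτ
  set θ : ℝ := ω * τ with hθ
  set e : ℂ := Complex.exp (-(Complex.I * ((ω:ℂ) * (τ:ℂ)))) with he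
  have E2 : Complex.I * (e - 1) = (((k^2+lam)*τ/2 : ℝ):ℂ) * (e + 1) := by
    push_cast
    field_simp at E
    linear_combination E / 8
  have hee : e = (Real.cos θ : ℂ) - (Real.sin θ : ℂ) * Complex.I := by
    rw [he, show -(Complex.I*((ω:ℂ)*(τ:ℂ))) = ((-θ : ℝ):ℂ)*Complex.I by rw [hθ]; push_cast; ring,
      Complex.exp_mul_I, ← Complex.ofReal_cos, ← Complex.ofReal_sin, Real.cos_neg, Real.sin_neg]
    push_cast; ring
  set C : ℝ := (k^2 + lam) * τ / 2 with hC
  rw [hee, Complex.ext_iff] at E2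
  simp only [Complex.mul_re, Complex.mul_im, Complex.add_re, Complex.add_im, Complex.sub_re,
    Complex.sub_im, Complex.one_re, Complex.one_im, Complex.I_re, Complex.I_im,
    Complex.ofReal_re, Complex.ofReal_im] at E2
  obtain ⟨h1, h2⟩ := E2
  ring_nf at h1
  have hb := abs_lt.mp hω
  have hx1 : -(Real.pi/2) < θ/2 := by rw [hθ] at *; linarith [hb.1]
  have hx2 : θ/2 < Real.pi/2 := by rw [hθ] at *; linarith [hb.2]
  have hcos : 0 < Real.cos (θ/2) := Real.cos_pos_of_mem_Ioo ⟨by linarith, hx2⟩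
  have hsin2 : Real.sin θ = 2 * Real.sin (θ/2) * Real.cos (θ/2) := by
    rw [show θ = 2 * (θ/2) by ring, Real.sin_two_mul]; ring_nf
  have hcos2 : Real.cos θ = 2 * Real.cos (θ/2)^2 - 1 := by
    rw [show θ = 2 * (θ/2) by ring, Real.cos_two_mul]; ring_nf
  have hsc : Real.sin (θ/2) = C * Real.cos (θ/2) := by
    have h3 : (2 * Real.cos (θ/2)) * Real.sin (θ/2)
        = (2 * Real.cos (θ/2)) * (C * Real.cos (θ/2)) := by
      rw [hsin2, hcos2] at h1; nlinarith [h1]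
    exact mul_left_cancel₀ (by positivity) h3
  have htan : Real.tan (θ/2) = C := by
    rw [Real.tan_eq_sin_div_cos, hsc]
    field_simp
  have harct : Real.arctan C = θ/2 := by
    rw [← htan, Real.arctan_tan hx1 hx2]
  rw [harct, hθ]
  field_simp
end

section
/- Let k, ω̃, τ, λ ∈ ℝ with τ > 0, and for n ∈ ℤ define uₙ : ℝ → ℂ by uₙ(x) = exp(i·(k·x − ω̃·n·τ)). Suppose that for all n ∈ ℤ and x ∈ ℝ the Leapfrog scheme holds: (i/(2τ))·(u_{n+1}(x) − u_{n−1}(x)) = −(1/4)·(Δu_{n+1}(x) + 2·Δuₙ(x) + Δu_{n−1}(x)) + (λ/8)·( |(uₙ(x)+u_{n−1}(x))/2|² + |(u_{n+1}(x)+uₙ(x))/2|² )·(u_{n+1}(x) + 2·uₙ(x) + u_{n−1}(x)). If moreover cos(ω̃·τ/2) ≠ 0, then (2/τ)·sin(ω̃·τ/2) = (k² + λ·cos²(ω̃·τ/2))·cos(ω̃·τ/2). -/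
open Complex

lemma hasDerivAt_cexp_lin (a b : ℂ) (x : ℝ) :
    HasDerivAt (fun x : ℝ => Complex.exp (a*x + b)) (a * Complex.exp (a*x + b)) x := by
  have h : HasDerivAt (fun z : ℂ => Complex.exp (a*z + b))
      (Complex.exp (a*(x:ℂ)+b) * (a*1)) (x:ℂ) :=
    (((hasDerivAt_id (x:ℂ)).const_mul a).add_const b).cexp
  simpa [mul_comm] using h.comp_ofReal

lemma deriv2_cexp_lin (a b : ℂ) (x : ℝ) :
    deriv (deriv (fun x:ℝ => Complex.exp (a*x+b))) x = a^2 * Complex.exp (a*x+b) := by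
  have h1 : deriv (fun x:ℝ => Complex.exp (a*x+b)) = fun x:ℝ => a * Complex.exp (a*x+b) :=
    funext fun x => (hasDerivAt_cexp_lin a b x).deriv
  rw [h1, ((hasDerivAt_cexp_lin a b x).const_mul a).deriv]; ring

/-- Numerical dispersion relation of the Leapfrog scheme for the cubic NLS: if the
discrete plane wave `uₙ(x) = exp(i(kx − ω̃nτ))` satisfies the scheme and
`cos(ω̃τ/2) ≠ 0`, then `(2/τ)sin(ω̃τ/2) = (k² + λcos²(ω̃τ/2))cos(ω̃τ/2)`. -/
theorem leapfrog_dispersion_relation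
    (k ω τ lam : ℝ) (hτ : 0 < τ)
    (u : ℤ → ℝ → ℂ)
    (hu : ∀ n : ℤ, ∀ x : ℝ, u n x = Complex.exp (Complex.I * ((k*x - ω*n*τ : ℝ) : ℂ)))
    (hscheme : ∀ n : ℤ, ∀ x : ℝ,
      (Complex.I / (2 * (τ : ℂ))) * (u (n+1) x - u (n-1) x) =
        -(1/4 : ℂ) * (deriv (deriv (u (n+1))) x + 2 * deriv (deriv (u n)) x
            + deriv (deriv (u (n-1))) x)
        + ((lam : ℂ)/8) *
            ((((‖(u n x + u (n-1) x) / 2‖)^2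
              + (‖(u (n+1) x + u n x) / 2‖)^2 : ℝ)) : ℂ)
            * (u (n+1) x + 2 * u n x + u (n-1) x))
    (hcos : Real.cos (ω * τ / 2) ≠ 0) :
    (2/τ) * Real.sin (ω * τ / 2)
      = (k^2 + lam * (Real.cos (ω * τ / 2))^2) * Real.cos (ω * τ / 2) := by
  have hu' : ∀ m : ℤ, u m = fun x : ℝ =>
      Complex.exp ((Complex.I*k)*x + (-(Complex.I*((ω*m*τ : ℝ) : ℂ)))) := by
    intro m; funext x; rw [hu]; congr 1; push_cast; ring
  have hD : ∀ (m : ℤ) (x : ℝ), deriv (deriv (u m)) x = -((k:ℂ)^2) * u m x := by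
    intro m x
    rw [hu' m, deriv2_cexp_lin,
      show ((Complex.I*(k:ℂ))^2 : ℂ) = -(k:ℂ)^2 by rw [mul_pow, Complex.I_sq]; ring]
  have key := hscheme 0 0
  rw [hD, hD, hD, hu, hu, hu] at key
  norm_num at key
  set c := Real.cos (ω*τ) with hc
  set s := Real.sin (ω*τ) with hs
  have e1 : Complex.exp (Complex.I * ((ω:ℂ)*(τ:ℂ))) = (c:ℂ) + (s:ℂ)*Complex.I := by
    rw [mul_comm, Complex.exp_mul_I, ← Complex.ofReal_mul, ← Complex.ofReal_cos,
      ← Complex.ofReal_sin]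
  have e2 : Complex.exp (-(Complex.I * ((ω:ℂ)*(τ:ℂ)))) = (c:ℂ) - (s:ℂ)*Complex.I := by
    rw [hc, hs]; push_cast
    rw [show -(Complex.I * ((ω:ℂ)*(τ:ℂ))) = (-((ω:ℂ)*(τ:ℂ))) * Complex.I by ring,
      Complex.exp_mul_I, Complex.cos_neg, Complex.sin_neg]
    ring
  rw [e1, e2] at key
  have hsc : s^2 + c^2 = 1 := by rw [hc, hs]; exact Real.sin_sq_add_cos_sq _
  have habs1 : (‖1 + ((c:ℂ) + (s:ℂ)*Complex.I)‖)^2 = 2 + 2*c := by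
    rw [Complex.sq_norm, Complex.normSq_apply]
    simp
    nlinarith [hsc]
  have habs2 : (‖(c:ℂ) - (s:ℂ)*Complex.I + 1‖)^2 = 2 + 2*c := by
    rw [Complex.sq_norm, Complex.normSq_apply]
    simp
    nlinarith [hsc]
  have r1 : (((‖1 + ((c:ℂ) + (s:ℂ)*Complex.I)‖ : ℝ) : ℂ)/2)^2
      = (((2+2*c)/4 : ℝ) : ℂ) := by
    rw [div_pow, ← Complex.ofReal_pow, habs1]; push_cast; ring
  have r2 : (((‖(c:ℂ) - (s:ℂ)*Complex.I + 1‖ : ℝ) : ℂ)/2)^2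
      = (((2+2*c)/4 : ℝ) : ℂ) := by
    rw [div_pow, ← Complex.ofReal_pow, habs2]; push_cast; ring
  rw [r1, r2] at key
  have hτc : (τ:ℂ) ≠ 0 := by exact_mod_cast hτ.ne'
  field_simp at key
  have key2 := congrArg Complex.re key
  simp [← Complex.ofReal_pow] at key2
  have hss : s = 2 * Real.sin (ω*τ/2) * Real.cos (ω*τ/2) := by
    rw [hs, ← Real.sin_two_mul]; ring_nf
  have hcc : c = 2 * Real.cos (ω*τ/2)^2 - 1 := by
    rw [hc, ← Real.cos_two_mul]; ring_nf
  rw [hss, hcc] at key2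
  have hgoal : (2/τ * Real.sin (ω*τ/2)) * Real.cos (ω*τ/2)
      = ((k^2 + lam * Real.cos (ω*τ/2)^2) * Real.cos (ω*τ/2)) * Real.cos (ω*τ/2) := by
    field_simp
    rw [mul_comm τ ω]
    linear_combination key2/64
  exact mul_right_cancel₀ hcos hgoal
end

section
/- Let k, ω̃, τ, λ ∈ ℝ with τ > 0, and for n ∈ ℤ define uₙ : ℝ → ℂ by uₙ(x) = exp(i·(k·x − ω̃·n·τ)) and Rₙ(x) = (3·uₙ(x) − u_{n−1}(x))/2. Suppose that for all n ∈ ℤ and x ∈ ℝ the modified BDF2 scheme holds: (i/τ)·(R_{n+1}(x) − Rₙ(x)) = −(1/2)·(ΔR_{n+1}(x) + ΔRₙ(x)) + (λ/4)·(|Rₙ(x)|² + |R_{n+1}(x)|²)·(R_{n+1}(x) + Rₙ(x)). Then (2/τ)·sin(ω̃·τ/2) = ( k² + (λ/2)·(5 − 3·cos(ω̃·τ)) )·cos(ω̃·τ/2). -/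
lemma aux_hasDerivAt (a : ℂ) (k x : ℝ) :
    HasDerivAt (fun x : ℝ => a * Complex.exp (Complex.I * k * x))
      (a * (Complex.I * k) * Complex.exp (Complex.I * k * x)) x := by
  have h1 : HasDerivAt (fun z : ℂ => Complex.exp (Complex.I * k * z))
      (Complex.exp (Complex.I * k * x) * (Complex.I * k)) (x : ℂ) := by
    simpa using ((hasDerivAt_id (x : ℂ)).const_mul (Complex.I * (k:ℂ))).cexp
  have h2 := (h1.comp_ofReal).const_mul a
  exact h2.congr_deriv (by ring)

lemma aux_deriv2 (a : ℂ) (k : ℝ) :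
    deriv (deriv (fun x : ℝ => a * Complex.exp (Complex.I * k * x)))
      = fun x : ℝ => (a * (Complex.I * k)^2) * Complex.exp (Complex.I * k * x) := by
  have hd : deriv (fun x : ℝ => a * Complex.exp (Complex.I * k * x))
      = fun x : ℝ => (a * (Complex.I * k)) * Complex.exp (Complex.I * k * x) :=
    funext fun x => (aux_hasDerivAt a k x).deriv
  rw [hd]
  funext x
  rw [(aux_hasDerivAt (a * (Complex.I * k)) k x).deriv]
  ring

/-- Numerical dispersion relation of the modified BDF2 scheme for the cubic NLS:
if the discrete plane wave `uₙ(x) = exp(i(kx − ω̃nτ))` with auxiliary variable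
`Rₙ = (3uₙ − u_{n−1})/2` satisfies the scheme, then
`(2/τ)sin(ω̃τ/2) = (k² + (λ/2)(5 − 3cos(ω̃τ)))cos(ω̃τ/2)`. -/
theorem modified_bdf2_dispersion_relation
    (k ω τ lam : ℝ) (hτ : 0 < τ)
    (u : ℤ → ℝ → ℂ) (R : ℤ → ℝ → ℂ)
    (hu : ∀ n : ℤ, ∀ x : ℝ, u n x = Complex.exp (Complex.I * ((k*x - ω*n*τ : ℝ) : ℂ)))
    (hR : ∀ n : ℤ, ∀ x : ℝ, R n x = (3 * u n x - u (n-1) x) / 2)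
    (hscheme : ∀ n : ℤ, ∀ x : ℝ,
      (Complex.I / (τ : ℂ)) * (R (n+1) x - R n x) =
        -(1/2 : ℂ) * (deriv (deriv (R (n+1))) x + deriv (deriv (R n)) x)
        + ((lam : ℂ)/4) *
            (((‖R n x‖^2 + ‖R (n+1) x‖^2 : ℝ)) : ℂ)
            * (R (n+1) x + R n x)) :
    (2/τ) * Real.sin (ω * τ / 2)
      = (k^2 + (lam/2) * (5 - 3 * Real.cos (ω * τ))) * Real.cos (ω * τ / 2) := by
  set c : ℂ := (3 - Complex.exp (Complex.I * ((ω*τ : ℝ) : ℂ))) / 2 with hcdef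
  set m : ℝ := (5 - 3 * Real.cos (ω*τ)) / 2 with hmdef
  -- plane-wave form of R
  have hRform : ∀ n : ℤ, ∀ x : ℝ,
      R n x = c * Complex.exp (Complex.I * ((k*x - ω*n*τ : ℝ) : ℂ)) := by
    intro n x
    rw [hR, hu, hu,
      show (Complex.I * ((k*x - ω*((n-1 : ℤ) : ℝ)*τ : ℝ) : ℂ))
        = Complex.I * ((k*x - ω*n*τ : ℝ) : ℂ) + Complex.I * ((ω*τ : ℝ) : ℂ) by
        push_cast; ring,
      Complex.exp_add]
    rw [hcdef]; ring
  -- function form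
  have hfun : ∀ n : ℤ, R n = fun x : ℝ =>
      (c * Complex.exp (-(Complex.I * ((ω*n*τ : ℝ) : ℂ)))) * Complex.exp (Complex.I * k * x) := by
    intro n; funext x
    rw [hRform,
      show (Complex.I * ((k*x - ω*n*τ : ℝ) : ℂ))
        = -(Complex.I * ((ω*n*τ : ℝ) : ℂ)) + Complex.I * (k:ℂ) * (x:ℂ) by push_cast; ring,
      Complex.exp_add]
    ring
  -- second derivative
  have hderiv2 : ∀ n : ℤ, ∀ x : ℝ, deriv (deriv (R n)) x = -(k:ℂ)^2 * R n x := by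
    intro n x
    rw [hfun n, aux_deriv2]
    have : -(k:ℂ)^2 * ((fun x : ℝ => (c * Complex.exp (-(Complex.I * ((ω*n*τ : ℝ) : ℂ)))) *
        Complex.exp (Complex.I * k * x)) x)
        = (c * Complex.exp (-(Complex.I * ((ω*n*τ : ℝ) : ℂ))) * (Complex.I * (k:ℂ))^2)
          * Complex.exp (Complex.I * k * x) := by
      show -(k:ℂ)^2 * ((c * Complex.exp (-(Complex.I * ((ω*n*τ : ℝ) : ℂ)))) *
        Complex.exp (Complex.I * k * x)) = _
      linear_combination (-(c * Complex.exp (-(Complex.I * ((ω*n*τ : ℝ) : ℂ))) * (k:ℂ)^2 *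
        Complex.exp (Complex.I * (k:ℂ) * (x:ℂ)))) * Complex.I_sq
    rw [this]
  -- modulus squared
  have hmabs : ‖c‖^2 = m := by
    have hc2 : c = ((((3 - Real.cos (ω*τ))/2 : ℝ)) : ℂ)
        + ((-(Real.sin (ω*τ))/2 : ℝ) : ℂ) * Complex.I := by
      rw [hcdef, show Complex.I * ((ω*τ : ℝ) : ℂ) = ((ω*τ : ℝ) : ℂ) * Complex.I by ring,
        Complex.exp_mul_I, ← Complex.ofReal_cos, ← Complex.ofReal_sin]
      push_cast; ring
    rw [Complex.sq_norm, hc2, Complex.normSq_add_mul_I, hmdef]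
    linear_combination (1/4) * Real.sin_sq_add_cos_sq (ω*τ)
  have habs : ∀ n : ℤ, ∀ x : ℝ, ‖R n x‖^2 = m := by
    intro n x
    rw [hRform, norm_mul,
      show ‖Complex.exp (Complex.I * ((k*x - ω*n*τ : ℝ) : ℂ))‖ = 1 by
        rw [Complex.norm_exp]; simp,
      mul_one, hmabs]
  -- c ≠ 0
  have hc : c ≠ 0 := by
    intro h
    have h3 : Complex.exp (Complex.I * ((ω*τ : ℝ) : ℂ)) = 3 := by
      rw [hcdef] at h
      linear_combination -2 * h
    have h4 := congrArg (‖·‖) h3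
    rw [Complex.norm_exp] at h4
    simp at h4
  -- specialize the scheme
  have hsch := hscheme 0 0
  set E : ℂ := Complex.exp (-(Complex.I * ((ω*τ : ℝ) : ℂ))) with hEdef
  have hR0 : R 0 0 = c := by
    rw [hRform, show (Complex.I * ((k*0 - ω*((0:ℤ):ℝ)*τ : ℝ) : ℂ)) = 0 by push_cast; ring,
      Complex.exp_zero, mul_one]
  have hR1 : R (0+1) 0 = c * E := by
    rw [hRform, hEdef,
      show (Complex.I * ((k*0 - ω*(((0:ℤ)+1 : ℤ):ℝ)*τ : ℝ) : ℂ))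
        = -(Complex.I * ((ω*τ : ℝ) : ℂ)) by push_cast; ring]
  rw [hderiv2, hderiv2, habs, habs, hR0, hR1] at hsch
  -- cancel c
  have hkey : (Complex.I / (τ:ℂ)) * (E - 1)
      = (((k^2 + lam*m : ℝ)) : ℂ) / 2 * (E + 1) := by
    apply mul_left_cancel₀ hc
    push_cast
    push_cast at hsch
    linear_combination hsch
  -- expand E
  have hEexp : E = ((Real.cos (ω*τ) : ℝ) : ℂ) - ((Real.sin (ω*τ) : ℝ) : ℂ) * Complex.I := by
    rw [hEdef, show -(Complex.I * ((ω*τ : ℝ) : ℂ)) = ((-(ω*τ) : ℝ) : ℂ) * Complex.I by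
      push_cast; ring, Complex.exp_mul_I, ← Complex.ofReal_cos, ← Complex.ofReal_sin,
      Real.cos_neg, Real.sin_neg]
    push_cast; ring
  rw [hEexp] at hkey
  set K : ℝ := k^2 + lam*m with hKdef
  -- split into real and imaginary parts
  have hkey2 : (((Real.sin (ω*τ))/τ : ℝ) : ℂ) + (((Real.cos (ω*τ) - 1)/τ : ℝ) : ℂ) * Complex.I
      = ((K/2*(Real.cos (ω*τ)+1) : ℝ) : ℂ) + ((-(K/2)*Real.sin (ω*τ) : ℝ) : ℂ) * Complex.I := by
    simp only [Complex.ofReal_div, Complex.ofReal_sub, Complex.ofReal_add, Complex.ofReal_mul,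
      Complex.ofReal_neg, Complex.ofReal_one, Complex.ofReal_ofNat]
    linear_combination hkey + (((Real.sin (ω*τ) : ℝ) : ℂ)/(τ:ℂ)) * Complex.I_sq
  rw [Complex.ext_iff] at hkey2
  simp only [Complex.add_re, Complex.add_im, Complex.ofReal_re, Complex.ofReal_im,
    Complex.mul_re, Complex.mul_im, Complex.I_re, Complex.I_im, mul_zero, zero_mul,
    mul_one, sub_zero, add_zero, zero_add, zero_sub, sub_self] at hkey2
  obtain ⟨hre, him⟩ := hkey2
  -- half-angle identities
  have hsin2 : Real.sin (ω*τ) = 2 * Real.sin (ω*τ/2) * Real.cos (ω*τ/2) := by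
    have := Real.sin_two_mul (ω*τ/2)
    rwa [show 2*(ω*τ/2) = ω*τ by ring] at this
  have hcos2 : Real.cos (ω*τ) = 2 * Real.cos (ω*τ/2)^2 - 1 := by
    have := Real.cos_two_mul (ω*τ/2)
    rwa [show 2*(ω*τ/2) = ω*τ by ring] at this
  have hpy := Real.sin_sq_add_cos_sq (ω*τ/2)
  have hτ0 : τ ≠ 0 := hτ.ne'
  rw [hsin2, hcos2] at hre him
  have h1 : 2 * Real.sin (ω*τ/2) * Real.cos (ω*τ/2) / τ = K * Real.cos (ω*τ/2)^2 := by
    linear_combination hre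
  have h2 : (2 * Real.cos (ω*τ/2)^2 - 2)/τ = -(K * Real.sin (ω*τ/2) * Real.cos (ω*τ/2)) := by
    linear_combination him
  have hgoal : 2/τ * Real.sin (ω*τ/2) = K * Real.cos (ω*τ/2) := by
    linear_combination Real.cos (ω*τ/2) * h1 - Real.sin (ω*τ/2) * h2
      + K * Real.cos (ω*τ/2) * hpy
  rw [hgoal, hKdef, hmdef]
  ring
end
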